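/- arXiv:2011.04363 — 3 statements merged into one kernel-verified Lean document; each statement's English description precedes it below -/
import Mathlib

section
/- Let F ⊆ ℝⁿ be bounded with lower box-counting dimension equal to its Assouad dimension. Then for every θ ∈ (0,1], both the lower and upper θ-intermediate dimensions of F equal the (common) box-counting dimension of F. -/
open Set Metric MeasureTheory ENNReal

/-- A cover of `F` witnessing the `θ`-intermediate dimension sum condition at scale `δ`:
a countable cover by sets of diameter between `δ^(1/θ)` and `δ` whose `s`-power diameter
sum is at most `ε`.  (When `θ = 0` the lower bound on diameters is vacuous, recovering
the Hausdorff dimension condition.) -/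
def interCoverSum {X : Type*} [PseudoMetricSpace X]
    (θ δ s ε : ℝ) (F : Set X) : Prop :=
  ∃ 𝒰 : Set (Set X), 𝒰.Countable ∧ F ⊆ ⋃₀ 𝒰 ∧
    (∀ U ∈ 𝒰, EMetric.diam U ≤ ENNReal.ofReal δ ∧
      (θ ≠ 0 → ENNReal.ofReal (δ ^ (1 / θ)) ≤ EMetric.diam U)) ∧
    ∑' U : 𝒰, EMetric.diam (U : Set X) ^ s ≤ ENNReal.ofReal ε

/-- The lower `θ`-intermediate dimension of `F`. -/
noncomputable def lowerInterDim {X : Type*} [PseudoMetricSpace X] (θ : ℝ) (F : Set X) : ℝ :=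
  sInf {s : ℝ | 0 ≤ s ∧ ∀ ε > 0, ∀ δ₀ > 0, ∃ δ, 0 < δ ∧ δ ≤ δ₀ ∧ interCoverSum θ δ s ε F}

/-- The upper `θ`-intermediate dimension of `F`. -/
noncomputable def upperInterDim {X : Type*} [PseudoMetricSpace X] (θ : ℝ) (F : Set X) : ℝ :=
  sInf {s : ℝ | 0 ≤ s ∧ ∀ ε > 0, ∃ δ₀ > 0, ∀ δ, 0 < δ → δ ≤ δ₀ → interCoverSum θ δ s ε F}

/-- Lower box-counting dimension: the `θ = 1` lower intermediate dimension, i.e. covers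
by sets all of the same diameter. -/
noncomputable def lowerBoxDim {X : Type*} [PseudoMetricSpace X] (F : Set X) : ℝ :=
  lowerInterDim 1 F

/-- Upper box-counting dimension: the `θ = 1` upper intermediate dimension. -/
noncomputable def upperBoxDim {X : Type*} [PseudoMetricSpace X] (F : Set X) : ℝ :=
  upperInterDim 1 F

/-- The Assouad dimension of a set `F` in a metric space. -/
noncomputable def assouadDim {X : Type*} [PseudoMetricSpace X] (F : Set X) : ℝ :=
  sInf {s : ℝ | 0 ≤ s ∧ ∃ C > 0, ∀ x ∈ F, ∀ r R : ℝ, 0 < r → r < R →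
    ∃ (N : ℕ) (U : Fin N → Set X),
      (F ∩ Metric.closedBall x R ⊆ ⋃ i, U i) ∧
      (∀ i, EMetric.diam (U i) ≤ ENNReal.ofReal r) ∧
      (N : ℝ) ≤ C * (R / r) ^ s}



variable {n : ℕ}

lemma coord_dist_le (x y : EuclideanSpace ℝ (Fin n)) (i : Fin n) :
    dist (x i) (y i) ≤ dist x y := by
  rw [EuclideanSpace.dist_eq]
  have h1 : dist (x i) (y i) ^ 2 ≤ ∑ j, dist (x j) (y j) ^ 2 :=
    Finset.single_le_sum (f := fun j => dist (x j) (y j) ^ 2)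
      (fun j _ => sq_nonneg _) (Finset.mem_univ i)
  calc dist (x i) (y i) = Real.sqrt (dist (x i) (y i) ^ 2) := by
        rw [Real.sqrt_sq dist_nonneg]
    _ ≤ _ := Real.sqrt_le_sqrt h1

lemma ediam_closedBall_eq (hn : 0 < n) (p : EuclideanSpace ℝ (Fin n)) {ρ : ℝ} (hρ : 0 ≤ ρ) :
    EMetric.diam (Metric.closedBall p ρ) = ENNReal.ofReal (2 * ρ) := by
  apply le_antisymm
  · apply EMetric.diam_le
    intro y hy z hz
    rw [edist_dist]
    apply ENNReal.ofReal_le_ofReal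
    calc dist y z ≤ dist y p + dist p z := dist_triangle _ _ _
      _ ≤ ρ + ρ := by
          exact add_le_add (Metric.mem_closedBall.mp hy) (by
            rw [dist_comm]; exact Metric.mem_closedBall.mp hz)
      _ = 2 * ρ := by ring
  · set e : EuclideanSpace ℝ (Fin n) := EuclideanSpace.single ⟨0, hn⟩ (1:ℝ) with he
    have hne : ‖e‖ = 1 := by simp [he, EuclideanSpace.norm_single]
    have h1 : p + ρ • e ∈ Metric.closedBall p ρ := by
      rw [Metric.mem_closedBall, dist_eq_norm]
      simp [norm_smul, hne, abs_of_nonneg hρ]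
    have h2 : p - ρ • e ∈ Metric.closedBall p ρ := by
      rw [Metric.mem_closedBall, dist_eq_norm]
      simp [norm_smul, hne, abs_of_nonneg hρ]
    have h3 : edist (p + ρ • e) (p - ρ • e) = ENNReal.ofReal (2 * ρ) := by
      rw [edist_dist, dist_eq_norm]
      have : p + ρ • e - (p - ρ • e) = (2 * ρ) • e := by
        module
      rw [this, norm_smul, hne]
      simp [abs_of_nonneg hρ]
    rw [← h3]
    exact EMetric.edist_le_diam_of_mem h1 h2


set_option maxHeartbeats 1000000 in
lemma grid_cover (n : ℕ) (x : EuclideanSpace ℝ (Fin n)) (r R : ℝ) (hr : 0 < r) (hR : r < R) :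
    ∃ (N : ℕ) (U : Fin N → Set (EuclideanSpace ℝ (Fin n))),
      (Metric.closedBall x R ⊆ ⋃ i, U i) ∧ (∀ i, EMetric.diam (U i) ≤ ENNReal.ofReal r) ∧
      (N : ℝ) ≤ (2 * Real.sqrt n + 1) ^ n * (R / r) ^ (n : ℝ) := by
  have hR0 : 0 < R := hr.trans hR
  have hRr : 1 ≤ R / r := (one_le_div hr).mpr hR.le
  rcases Nat.eq_zero_or_pos n with hn | hn
  · subst hn
    refine ⟨1, fun _ => Set.univ, fun y _ => Set.mem_iUnion.mpr ⟨0, Set.mem_univ y⟩, ?_, ?_⟩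
    · intro i
      have : Subsingleton (EuclideanSpace ℝ (Fin 0)) :=
        ⟨fun a b => PiLp.ext fun i => i.elim0⟩
      rw [show EMetric.diam ((fun _ => Set.univ) i : Set (EuclideanSpace ℝ (Fin 0))) = 0 from
        EMetric.diam_subsingleton (Set.subsingleton_of_subsingleton)]
      exact zero_le
    · simp
  · have hsn : 0 < Real.sqrt n := Real.sqrt_pos.mpr (by exact_mod_cast hn)
    have hsn1 : 1 ≤ Real.sqrt n := by
      rw [show (1:ℝ) = Real.sqrt 1 by simp]
      exact Real.sqrt_le_sqrt (by exact_mod_cast hn)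
    set a : ℝ := r / Real.sqrt n with ha
    have ha0 : 0 < a := div_pos hr hsn
    set m : ℕ := ⌈2 * R / a⌉₊ with hm
    have hm1 : 1 ≤ m := Nat.one_le_iff_ne_zero.mpr (by
      simp only [hm, ne_eq, Nat.ceil_eq_zero, not_le]
      positivity)
    -- the boxes
    set box : (Fin n → Fin m) → Set (EuclideanSpace ℝ (Fin n)) := fun g =>
      {y | ∀ i, x i - R + g i * a ≤ y i ∧ y i ≤ x i - R + (g i + 1) * a} with hbox
    refine ⟨m ^ n, fun k => box (finFunctionFinEquiv.symm k), ?_, ?_, ?_⟩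
    · -- cover
      intro y hy
      have hyc : ∀ i, |y i - x i| ≤ R := by
        intro i
        have := coord_dist_le y x i
        rw [Real.dist_eq] at this
        exact this.trans (Metric.mem_closedBall.mp hy)
      set g : Fin n → Fin m := fun i =>
        ⟨min ⌊(y i - (x i - R)) / a⌋₊ (m - 1), by
          have : min ⌊(y i - (x i - R)) / a⌋₊ (m - 1) ≤ m - 1 := min_le_right _ _
          omega⟩ with hg
      have hyg : y ∈ box g := by
        intro i
        have hc0 : 0 ≤ y i - (x i - R) := by
          have := abs_le.mp (hyc i); linarith [this.1]
        have hc2 : y i - (x i - R) ≤ 2 * R := by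
          have := abs_le.mp (hyc i); linarith [this.2]
        set c : ℝ := y i - (x i - R) with hc
        have hca : 0 ≤ c / a := div_nonneg hc0 ha0.le
        have h2Rm : 2 * R ≤ m * a := by
          have := Nat.le_ceil (2 * R / a)
          rw [← hm] at this
          calc 2 * R = (2 * R / a) * a := by field_simp
            _ ≤ m * a := by nlinarith
        rcases le_or_gt ⌊c / a⌋₊ (m - 1) with hfl | hfl
        · have hgi : (g i : ℕ) = ⌊c / a⌋₊ := by
            show min ⌊c / a⌋₊ (m - 1) = _; exact min_eq_left hfl
          constructor
          · have h1 : (⌊c / a⌋₊ : ℝ) ≤ c / a := Nat.floor_le hca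
            have : (⌊c / a⌋₊ : ℝ) * a ≤ c := by
              calc (⌊c / a⌋₊ : ℝ) * a ≤ (c / a) * a := by nlinarith
                _ = c := by field_simp
            rw [hgi] at *
            linarith
          · have h1 : c / a < ⌊c / a⌋₊ + 1 := Nat.lt_floor_add_one _
            have : c < ((⌊c / a⌋₊ : ℝ) + 1) * a := by
              calc c = (c / a) * a := by field_simp
                _ < ((⌊c / a⌋₊ : ℝ) + 1) * a := by nlinarith
            rw [hgi] at *
            linarith
        · have hgi : (g i : ℕ) = m - 1 := by
            show min ⌊c / a⌋₊ (m - 1) = _; exact min_eq_right hfl.le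
          have hgir : ((g i : ℕ) : ℝ) = (m : ℝ) - 1 := by
            rw [hgi, Nat.cast_sub hm1]; simp
          have hmc : (m : ℝ) ≤ c / a := by
            have : m ≤ ⌊c / a⌋₊ := by omega
            exact_mod_cast (Nat.le_floor_iff hca).mp this
          constructor
          · have : (m : ℝ) * a ≤ c := by
              calc (m : ℝ) * a ≤ (c / a) * a := by nlinarith
                _ = c := by field_simp
            rw [hgir]
            nlinarith
          · rw [hgir]
            have : ((m : ℝ) - 1 + 1) * a = m * a := by ring
            rw [this]
            linarith
      refine Set.mem_iUnion.mpr ⟨finFunctionFinEquiv g, ?_⟩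
      rw [Equiv.symm_apply_apply]
      exact hyg
    · -- diameter
      intro k
      apply EMetric.diam_le
      intro y hy z hz
      rw [edist_dist]
      apply ENNReal.ofReal_le_ofReal
      set g := finFunctionFinEquiv.symm k
      have hd : ∀ i, dist (y i) (z i) ≤ a := by
        intro i
        have h1 := hy i
        have h2 := hz i
        rw [Real.dist_eq, abs_le]
        constructor <;> [skip; skip] <;>
          · simp only [hbox, Set.mem_setOf_eq] at h1 h2
            nlinarith [h1.1, h1.2, h2.1, h2.2]
      rw [EuclideanSpace.dist_eq]
      have : ∑ i, dist (y i) (z i) ^ 2 ≤ n * a ^ 2 := by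
        calc ∑ i, dist (y i) (z i) ^ 2 ≤ ∑ _i : Fin n, a ^ 2 :=
              Finset.sum_le_sum (fun i _ => by nlinarith [hd i, dist_nonneg (x := y i) (y := z i)])
          _ = n * a ^ 2 := by rw [Finset.sum_const, Finset.card_univ, Fintype.card_fin, nsmul_eq_mul]
      calc Real.sqrt (∑ i, dist (y i) (z i) ^ 2) ≤ Real.sqrt (n * a ^ 2) :=
            Real.sqrt_le_sqrt this
        _ = Real.sqrt n * a := by
            rw [Real.sqrt_mul (by positivity), Real.sqrt_sq ha0.le]
        _ = r := by rw [ha]; field_simp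
    · -- count
      have hmle : (m : ℝ) ≤ (2 * Real.sqrt n + 1) * (R / r) := by
        have h1 : (m : ℝ) < 2 * R / a + 1 := Nat.ceil_lt_add_one (by positivity)
        have h2 : 2 * R / a = 2 * Real.sqrt n * (R / r) := by
          rw [ha, div_div_eq_mul_div]; ring
        nlinarith
      calc ((m ^ n : ℕ) : ℝ) = (m : ℝ) ^ n := by push_cast; ring
        _ ≤ ((2 * Real.sqrt n + 1) * (R / r)) ^ n := by
            apply pow_le_pow_left₀ (by positivity) hmle
        _ = (2 * Real.sqrt n + 1) ^ n * (R / r) ^ n := mul_pow _ _ _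
        _ = (2 * Real.sqrt n + 1) ^ n * (R / r) ^ (n : ℝ) := by
            rw [Real.rpow_natCast]
variable {n : ℕ}

/-- The covering property appearing in the definition of Assouad dimension. -/
def AssouadProp {X : Type*} [PseudoMetricSpace X] (F : Set X) (t C : ℝ) : Prop :=
  ∀ x ∈ F, ∀ r R : ℝ, 0 < r → r < R →
    ∃ (N : ℕ) (U : Fin N → Set X),
      (F ∩ Metric.closedBall x R ⊆ ⋃ i, U i) ∧
      (∀ i, EMetric.diam (U i) ≤ ENNReal.ofReal r) ∧
      (N : ℝ) ≤ C * (R / r) ^ t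

lemma assouadDim_eq {X : Type*} [PseudoMetricSpace X] (F : Set X) :
    assouadDim F = sInf {s : ℝ | 0 ≤ s ∧ ∃ C > 0, AssouadProp F s C} := rfl

lemma grid_assouadProp (F : Set (EuclideanSpace ℝ (Fin n))) :
    AssouadProp F (n : ℝ) ((2 * Real.sqrt n + 1) ^ n) := by
  intro x _ r R hr hrR
  obtain ⟨N, U, hcov, hdiam, hN⟩ := grid_cover n x r R hr hrR
  exact ⟨N, U, (Set.inter_subset_right).trans hcov, hdiam, hN⟩

lemma assouad_nonempty (F : Set (EuclideanSpace ℝ (Fin n))) :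
    ((n : ℝ)) ∈ {s : ℝ | 0 ≤ s ∧ ∃ C > 0, AssouadProp F s C} :=
  ⟨Nat.cast_nonneg n, (2 * Real.sqrt n + 1) ^ n, by positivity, grid_assouadProp F⟩

/-- From the Assouad covering property, cover `F ∩ closedBall x R` by closed balls of
radius `r/2` (hence of diameter exactly `r`). -/
lemma ball_cover (hn : 0 < n) {F : Set (EuclideanSpace ℝ (Fin n))} {t C : ℝ}
    (hw : AssouadProp F t C) {x : EuclideanSpace ℝ (Fin n)} (hx : x ∈ F)
    {r R : ℝ} (hr : 0 < r) (hrR : r / 2 < R) :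
    ∃ (N : ℕ) (p : Fin N → EuclideanSpace ℝ (Fin n)),
      (F ∩ Metric.closedBall x R ⊆ ⋃ i, Metric.closedBall (p i) (r / 2)) ∧
      (N : ℝ) ≤ C * (2 * R / r) ^ t := by
  obtain ⟨N, V, hcov, hdiam, hN⟩ := hw x hx (r / 2) R (by positivity) hrR
  classical
  refine ⟨N, fun i => if h : (V i).Nonempty then h.choose else x, ?_, ?_⟩
  · intro y hy
    obtain ⟨i, hi⟩ := Set.mem_iUnion.mp (hcov hy)
    refine Set.mem_iUnion.mpr ⟨i, ?_⟩
    have hne : (V i).Nonempty := ⟨y, hi⟩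
    simp only [dif_pos hne]
    have hmem : hne.choose ∈ V i := hne.choose_spec
    rw [Metric.mem_closedBall]
    have h1 : edist y hne.choose ≤ ENNReal.ofReal (r / 2) :=
      le_trans (EMetric.edist_le_diam_of_mem hi hmem) (hdiam i)
    rw [edist_dist] at h1
    exact (ENNReal.ofReal_le_ofReal_iff (by positivity)).mp h1
  · calc (N : ℝ) ≤ C * (R / (r / 2)) ^ t := hN
      _ = C * (2 * R / r) ^ t := by
          congr 2
          field_simp
lemma interCoverSum_empty {X : Type*} [PseudoMetricSpace X] (θ δ s ε : ℝ) :
    interCoverSum θ δ s ε (∅ : Set X) := by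
  refine ⟨∅, Set.countable_empty, by simp, by simp, ?_⟩
  rw [show (∅ : Set (Set X)) = (∅ : Set (Set X)) from rfl]
  simp only [tsum_empty]
  exact zero_le

lemma tsum_range_le {X ι : Type*} (g : Set X → ℝ≥0∞) (f : ι → Set X) :
    ∑' U : ↥(Set.range f), g U ≤ ∑' i, g (f i) :=
  ENNReal.tsum_le_tsum_comp_of_surjective (Set.rangeFactorization_surjective (f := f))
    (fun U => g U)

lemma upper_mem_of_assouad {n : ℕ} (hn : 0 < n) {F : Set (EuclideanSpace ℝ (Fin n))}
    (hFb : Bornology.IsBounded F) {t C θ s : ℝ} (hC : 0 < C)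
    (hw : AssouadProp F t C) (hθ : θ ∈ Set.Ioc (0:ℝ) 1) (ht : 0 ≤ t) (hts : t < s) :
    ∀ ε > 0, ∃ δ₀ > 0, ∀ δ, 0 < δ → δ ≤ δ₀ → interCoverSum θ δ s ε F := by
  rcases F.eq_empty_or_nonempty with rfl | ⟨x₀, hx₀⟩
  · exact fun ε _ => ⟨1, one_pos, fun δ _ _ => interCoverSum_empty θ δ s ε⟩
  intro ε hε
  set R : ℝ := Metric.diam F + 1 with hR
  have hR1 : 1 ≤ R := by
    have := Metric.diam_nonneg (s := F); linarith
  have hR0 : 0 < R := by linarith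
  set M : ℝ := C * (2 * R) ^ t with hM
  have hM0 : 0 < M := by positivity
  set e : ℝ := (s - t) / θ with he
  have he0 : 0 < e := div_pos (by linarith) hθ.1
  set A : ℝ := (ε / M) ^ (1 / e) with hA
  have hA0 : 0 < A := Real.rpow_pos_of_pos (div_pos hε hM0) _
  refine ⟨min A (1/2), lt_min hA0 (by norm_num), fun δ hδ hδ₀ => ?_⟩
  have hδA : δ ≤ A := hδ₀.trans (min_le_left _ _)
  have hδhalf : δ ≤ 1/2 := hδ₀.trans (min_le_right _ _)
  have hδ1 : δ ≤ 1 := by linarith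
  set r : ℝ := δ ^ (1/θ) with hr'
  have hr : 0 < r := Real.rpow_pos_of_pos hδ _
  have hrδ : r ≤ δ := by
    have h1θ : 1 ≤ 1/θ := (le_div_iff₀ hθ.1).mpr (by linarith [hθ.2])
    calc r = δ ^ (1/θ) := rfl
      _ ≤ δ ^ (1:ℝ) := Real.rpow_le_rpow_of_exponent_ge hδ hδ1 h1θ
      _ = δ := Real.rpow_one δ
  have hrR : r / 2 < R := by linarith
  obtain ⟨N, p, hcov, hN⟩ := ball_cover hn hw hx₀ hr hrR
  have hball : ∀ i, EMetric.diam (Metric.closedBall (p i) (r/2)) = ENNReal.ofReal r := by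
    intro i
    rw [ediam_closedBall_eq hn _ (by positivity)]
    congr 1; ring
  set f : Fin N → Set (EuclideanSpace ℝ (Fin n)) := fun i => Metric.closedBall (p i) (r/2)
    with hf
  refine ⟨Set.range f, Set.countable_range f, ?_, ?_, ?_⟩
  · intro y hy
    have hy' : y ∈ F ∩ Metric.closedBall x₀ R := by
      refine ⟨hy, Metric.mem_closedBall.mpr ?_⟩
      have := Metric.dist_le_diam_of_mem hFb hy hx₀
      linarith
    obtain ⟨i, hi⟩ := Set.mem_iUnion.mp (hcov hy')
    exact ⟨f i, Set.mem_range_self i, hi⟩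
  · rintro U ⟨i, rfl⟩
    rw [hball i]
    exact ⟨ENNReal.ofReal_le_ofReal hrδ, fun _ => le_refl _⟩
  · calc ∑' U : ↥(Set.range f), EMetric.diam (U : Set (EuclideanSpace ℝ (Fin n))) ^ s
        ≤ ∑' i : Fin N, EMetric.diam (f i) ^ s := tsum_range_le (fun U => EMetric.diam U ^ s) f
      _ = ∑' _i : Fin N, ENNReal.ofReal r ^ s := by
          congr 1; funext i; rw [hball i]
      _ = (N : ℝ≥0∞) * ENNReal.ofReal r ^ s := by
          rw [tsum_fintype]
          simp [Finset.sum_const, nsmul_eq_mul]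
      _ = ENNReal.ofReal ((N : ℝ) * r ^ s) := by
          rw [ENNReal.ofReal_rpow_of_pos hr, ENNReal.ofReal_mul (Nat.cast_nonneg N),
            ENNReal.ofReal_natCast]
      _ ≤ ENNReal.ofReal ε := by
          apply ENNReal.ofReal_le_ofReal
          have hrs : (0:ℝ) ≤ r ^ s := (Real.rpow_pos_of_pos hr s).le
          have h1 : (N : ℝ) * r ^ s ≤ C * (2*R/r)^t * r^s :=
            mul_le_mul_of_nonneg_right hN hrs
          have h2 : C * (2*R/r)^t * r^s = M * r ^ (s - t) := by
            rw [Real.div_rpow (by linarith) hr.le, Real.rpow_sub hr, hM]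
            field_simp
          have h3 : r ^ (s - t) = δ ^ e := by
            rw [hr', ← Real.rpow_mul hδ.le]
            congr 1
            rw [he]; ring
          have h4 : δ ^ e ≤ ε / M := by
            calc δ ^ e ≤ A ^ e := Real.rpow_le_rpow hδ.le hδA he0.le
              _ = (ε / M) ^ ((1/e) * e) := by
                  rw [hA, ← Real.rpow_mul (div_pos hε hM0).le]
              _ = ε / M := by
                  rw [one_div_mul_cancel he0.ne', Real.rpow_one]
          calc (N : ℝ) * r ^ s ≤ M * r ^ (s-t) := by rw [← h2]; exact h1
            _ = M * δ ^ e := by rw [h3]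
            _ ≤ M * (ε / M) := mul_le_mul_of_nonneg_left h4 hM0.le
            _ = ε := by field_simp
section DimSets
variable {X : Type*} [PseudoMetricSpace X]

def SL (θ : ℝ) (F : Set X) : Set ℝ :=
  {s : ℝ | 0 ≤ s ∧ ∀ ε > 0, ∀ δ₀ > 0, ∃ δ, 0 < δ ∧ δ ≤ δ₀ ∧ interCoverSum θ δ s ε F}

def SU (θ : ℝ) (F : Set X) : Set ℝ :=
  {s : ℝ | 0 ≤ s ∧ ∀ ε > 0, ∃ δ₀ > 0, ∀ δ, 0 < δ → δ ≤ δ₀ → interCoverSum θ δ s ε F}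

lemma lowerInterDim_eq (θ : ℝ) (F : Set X) : lowerInterDim θ F = sInf (SL θ F) := rfl
lemma upperInterDim_eq (θ : ℝ) (F : Set X) : upperInterDim θ F = sInf (SU θ F) := rfl

lemma SU_subset_SL (θ : ℝ) (F : Set X) : SU θ F ⊆ SL θ F := by
  rintro s ⟨h0, hs⟩
  refine ⟨h0, fun ε hε δ₀ hδ₀ => ?_⟩
  obtain ⟨δ₁, hδ₁, hall⟩ := hs ε hε
  exact ⟨min δ₀ δ₁, lt_min hδ₀ hδ₁, min_le_left _ _,
    hall _ (lt_min hδ₀ hδ₁) (min_le_right _ _)⟩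

lemma SL_bddBelow (θ : ℝ) (F : Set X) : BddBelow (SL θ F) := ⟨0, fun s hs => hs.1⟩
lemma SU_bddBelow (θ : ℝ) (F : Set X) : BddBelow (SU θ F) := ⟨0, fun s hs => hs.1⟩

lemma dims_of_empty (θ : ℝ) :
    lowerInterDim θ (∅ : Set X) = 0 ∧ upperInterDim θ (∅ : Set X) = 0 := by
  have h1 : SL θ (∅ : Set X) = Set.Ici 0 := by
    ext s
    exact ⟨fun hs => hs.1, fun h0 =>
      ⟨h0, fun ε hε δ₀ hδ₀ => ⟨δ₀, hδ₀, le_refl _, interCoverSum_empty θ δ₀ s ε⟩⟩⟩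
  have h2 : SU θ (∅ : Set X) = Set.Ici 0 := by
    ext s
    exact ⟨fun hs => hs.1, fun h0 =>
      ⟨h0, fun ε hε => ⟨1, one_pos, fun δ _ _ => interCoverSum_empty θ δ s ε⟩⟩⟩
  rw [lowerInterDim_eq, upperInterDim_eq, h1, h2, csInf_Ici]
  exact ⟨rfl, rfl⟩

end DimSets

lemma dims_of_dim_zero {F : Set (EuclideanSpace ℝ (Fin 0))} (hF : F.Nonempty) {θ : ℝ}
    (hθ : θ ∈ Set.Ioc (0:ℝ) 1) :
    lowerInterDim θ F = 0 ∧ upperInterDim θ F = 0 := by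
  have hsub : Subsingleton (EuclideanSpace ℝ (Fin 0)) := ⟨fun a b => PiLp.ext fun i => i.elim0⟩
  have hno : ∀ δ s ε : ℝ, 0 < δ → ¬ interCoverSum θ δ s ε F := by
    rintro δ s ε hδ ⟨𝒰, _, hcov, hU, _⟩
    obtain ⟨y, hy⟩ := hF
    obtain ⟨U, hUm, hyU⟩ := hcov hy
    have hd : EMetric.diam U = 0 := EMetric.diam_subsingleton (Set.subsingleton_of_subsingleton)
    have := (hU U hUm).2 hθ.1.ne'
    rw [hd] at this
    exact absurd this (by
      simp only [nonpos_iff_eq_zero, ENNReal.ofReal_eq_zero, not_le]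
      exact Real.rpow_pos_of_pos hδ _ )
  have h1 : SL θ F = ∅ := by
    ext s
    simp only [Set.mem_empty_iff_false, iff_false]
    rintro ⟨_, hs⟩
    obtain ⟨δ, hδ, _, hc⟩ := hs 1 one_pos 1 one_pos
    exact hno δ s 1 hδ hc
  have h2 : SU θ F = ∅ := by
    ext s
    simp only [Set.mem_empty_iff_false, iff_false]
    rintro ⟨_, hs⟩
    obtain ⟨δ₀, hδ₀, hall⟩ := hs 1 one_pos
    exact hno δ₀ s 1 hδ₀ (hall δ₀ hδ₀ (le_refl _))
  rw [lowerInterDim_eq, upperInterDim_eq, h1, h2, Real.sInf_empty]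
  exact ⟨rfl, rfl⟩
lemma exp_arith {θ t s κ x : ℝ} (hθ : θ ≠ 0) (hx : x = (1-θ)*t + θ*s + κ) :
    t - s + 1/θ * (x - t) = κ/θ := by
  subst hx; field_simp; ring

set_option maxHeartbeats 1000000 in
lemma box_le_lowerInter {n : ℕ} (hn : 0 < n) {F : Set (EuclideanSpace ℝ (Fin n))}
    (hFb : Bornology.IsBounded F) (h : lowerBoxDim F = assouadDim F)
    {θ : ℝ} (hθ : θ ∈ Set.Ioc (0:ℝ) 1) :
    lowerBoxDim F ≤ lowerInterDim θ F := by
  have hSAne : {s : ℝ | 0 ≤ s ∧ ∃ C > 0, AssouadProp F s C}.Nonempty :=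
    ⟨(n : ℝ), assouad_nonempty F⟩
  have hSLne : (SL θ F).Nonempty := by
    refine ⟨(n : ℝ) + 1, SU_subset_SL θ F ⟨by positivity, ?_⟩⟩
    exact upper_mem_of_assouad hn hFb (by positivity) (grid_assouadProp F) hθ
      (Nat.cast_nonneg n) (lt_add_one _)
  by_contra hcon
  push_neg at hcon
  set B := lowerBoxDim F with hB
  rw [lowerInterDim_eq] at hcon
  obtain ⟨s, hsSL, hsB⟩ := exists_lt_of_csInf_lt hSLne hcon
  have hs0 : 0 ≤ s := hsSL.1
  set κ := θ * (B - s) / 4 with hκdef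
  have hκ : 0 < κ := by
    apply div_pos (mul_pos hθ.1 (by linarith)) (by norm_num)
  obtain ⟨t₀, ht₀SA, ht₀B⟩ := exists_lt_of_csInf_lt hSAne
    (show sInf _ < B + κ by rw [← assouadDim_eq, ← h]; linarith)
  obtain ⟨ht₀0, C, hC, hw₀⟩ := ht₀SA
  set t := max t₀ s with htdef
  have hw : AssouadProp F t C := by
    intro x hx r R hr hrR
    obtain ⟨N, U, h1, h2, h3⟩ := hw₀ x hx r R hr hrR
    refine ⟨N, U, h1, h2, h3.trans ?_⟩
    exact mul_le_mul_of_nonneg_left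
      (Real.rpow_le_rpow_of_exponent_le ((one_le_div hr).mpr hrR.le) (le_max_left _ _)) hC.le
  have ht0 : 0 ≤ t := le_trans ht₀0 (le_max_left _ _)
  have hst : s ≤ t := le_max_right _ _
  have htB : t < B + κ := max_lt ht₀B (by linarith)
  set t' := (1 - θ) * t + θ * s + κ with ht'def
  have ht'B : t' < B := by
    have key : 0 ≤ (1 - θ) * (B + κ - t) := mul_nonneg (by linarith [hθ.2]) (by linarith)
    have h4κ : θ * (B - s) = 4 * κ := by rw [hκdef]; ring
    have hθκ : 0 ≤ θ * κ := mul_nonneg hθ.1.le hκ.le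
    nlinarith
  have ht'0 : 0 ≤ t' := by
    have h1 : 0 ≤ (1 - θ) * t := mul_nonneg (by linarith [hθ.2]) ht0
    have h2 : 0 ≤ θ * s := mul_nonneg hθ.1.le hs0
    linarith
  -- show t' is in the lower box set, contradicting t' < B
  have hmem : t' ∈ SL 1 F := by
    refine ⟨ht'0, fun ε' hε' δ₁ hδ₁ => ?_⟩
    set P := C * (2:ℝ) ^ (t : ℝ) with hPdef
    have hP0 : 0 < P := mul_pos hC (Real.rpow_pos_of_pos two_pos _)
    set ε := ε' / (P + 1) with hεdef
    have hε0 : 0 < ε := div_pos hε' (by linarith)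
    obtain ⟨δ, hδ, hδle, hICS⟩ := hsSL.2 ε hε0 (min (δ₁ ^ θ) 1)
      (lt_min (Real.rpow_pos_of_pos hδ₁ θ) one_pos)
    obtain ⟨𝒰, hcnt, hcovF, hUc, hsum⟩ := hICS
    have hδ1 : δ ≤ 1 := hδle.trans (min_le_right _ _)
    have hδθ : δ ≤ δ₁ ^ θ := hδle.trans (min_le_left _ _)
    set δ' := δ ^ (1/θ) with hδ'def
    have hδ'0 : 0 < δ' := Real.rpow_pos_of_pos hδ _
    have hδ'δ₁ : δ' ≤ δ₁ := by
      calc δ' = δ ^ (1/θ) := rfl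
        _ ≤ (δ₁ ^ θ) ^ (1/θ) := Real.rpow_le_rpow hδ.le hδθ (one_div_nonneg.mpr hθ.1.le)
        _ = δ₁ ^ (θ * (1/θ)) := (Real.rpow_mul hδ₁.le θ (1/θ)).symm
        _ = δ₁ := by rw [mul_one_div_cancel hθ.1.ne', Real.rpow_one]
    refine ⟨δ', hδ'0, hδ'δ₁, ?_⟩
    haveI : Countable ↥𝒰 := hcnt.to_subtype
    set K := P * δ ^ (t - s) * δ' ^ (t' - t) with hKdef
    have hK0 : 0 < K := by
      apply mul_pos (mul_pos hP0 (Real.rpow_pos_of_pos hδ _)) (Real.rpow_pos_of_pos hδ'0 _)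
    have key : ∀ U : ↥𝒰, ∃ (m : ℕ) (p : Fin m → EuclideanSpace ℝ (Fin n)),
        (F ∩ (U : Set (EuclideanSpace ℝ (Fin n))) ⊆
          ⋃ i, Metric.closedBall (p i) (δ' / 2)) ∧
        ((m : ℝ≥0∞) * ENNReal.ofReal δ' ^ t' ≤
          ENNReal.ofReal K * EMetric.diam (U : Set (EuclideanSpace ℝ (Fin n))) ^ s) := by
      intro U
      by_cases hne : ((U : Set (EuclideanSpace ℝ (Fin n))) ∩ F).Nonempty
      · obtain ⟨hd1, hd2'⟩ := hUc U U.2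
        have hd2 := hd2' hθ.1.ne'
        have dfin : EMetric.diam (U : Set (EuclideanSpace ℝ (Fin n))) ≠ ⊤ :=
          (hd1.trans_lt ENNReal.ofReal_lt_top).ne
        set d := (EMetric.diam (U : Set (EuclideanSpace ℝ (Fin n)))).toReal with hddef
        have hd0' : 0 ≤ d := ENNReal.toReal_nonneg
        have hdd : ENNReal.ofReal d = EMetric.diam (U : Set (EuclideanSpace ℝ (Fin n))) :=
          ENNReal.ofReal_toReal dfin
        have hδ'd : δ' ≤ d := by
          rw [← hdd] at hd2
          exact (ENNReal.ofReal_le_ofReal_iff hd0').mp hd2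
        have hdδ : d ≤ δ := by
          rw [← hdd] at hd1
          exact (ENNReal.ofReal_le_ofReal_iff hδ.le).mp hd1
        have hd0 : 0 < d := lt_of_lt_of_le hδ'0 hδ'd
        obtain ⟨m, p, hcov, hm⟩ := ball_cover hn hw hne.choose_spec.2 hδ'0
          (show δ' / 2 < d by linarith)
        refine ⟨m, p, ?_, ?_⟩
        · intro y hy
          apply hcov
          refine ⟨hy.1, Metric.mem_closedBall.mpr ?_⟩
          have hbU : Bornology.IsBounded (U : Set (EuclideanSpace ℝ (Fin n))) :=
            Metric.isBounded_iff_ediam_ne_top.mpr dfin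
          exact Metric.dist_le_diam_of_mem hbU hy.2 hne.choose_spec.1
        · rw [← hdd, ENNReal.ofReal_rpow_of_pos hd0, ENNReal.ofReal_rpow_of_pos hδ'0,
            show ((m : ℝ≥0∞)) = ENNReal.ofReal (m : ℝ) by rw [ENNReal.ofReal_natCast],
            ← ENNReal.ofReal_mul (Nat.cast_nonneg m), ← ENNReal.ofReal_mul hK0.le]
          apply ENNReal.ofReal_le_ofReal
          have hδ't' : (0:ℝ) < δ' ^ t' := Real.rpow_pos_of_pos hδ'0 _
          have e1 : C * (2*d/δ') ^ t * δ' ^ t' = P * d ^ t * δ' ^ (t' - t) := by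
            rw [Real.div_rpow (by positivity) hδ'0.le, Real.mul_rpow (by norm_num) hd0.le,
              Real.rpow_sub hδ'0, hPdef]
            ring
          have e2 : d ^ t ≤ δ ^ (t - s) * d ^ s := by
            have h1 : d ^ t = d ^ (t - s) * d ^ s := by
              rw [← Real.rpow_add hd0]; ring_nf
            rw [h1]
            exact mul_le_mul_of_nonneg_right
              (Real.rpow_le_rpow hd0.le hdδ (by linarith)) (Real.rpow_pos_of_pos hd0 s).le
          calc (m : ℝ) * δ' ^ t' ≤ (C * (2*d/δ') ^ t) * δ' ^ t' :=
                mul_le_mul_of_nonneg_right hm hδ't'.le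
            _ = P * d ^ t * δ' ^ (t' - t) := e1
            _ ≤ P * (δ ^ (t - s) * d ^ s) * δ' ^ (t' - t) := by
                apply mul_le_mul_of_nonneg_right
                  (mul_le_mul_of_nonneg_left e2 hP0.le)
                  (Real.rpow_pos_of_pos hδ'0 _).le
            _ = K * d ^ s := by rw [hKdef]; ring
      · refine ⟨0, Fin.elim0, fun y hy => (hne ⟨y, hy.2, hy.1⟩).elim, ?_⟩
        simp only [Nat.cast_zero, zero_mul]
        exact zero_le
    choose m p hcov hbd using key
    set f : (Σ U : ↥𝒰, Fin (m U)) → Set (EuclideanSpace ℝ (Fin n)) :=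
      fun σ => Metric.closedBall (p σ.1 σ.2) (δ' / 2) with hfdef
    have hballd : ∀ σ, EMetric.diam (f σ) = ENNReal.ofReal δ' := by
      intro σ
      rw [hfdef]
      rw [ediam_closedBall_eq hn _ (by positivity)]
      congr 1; ring
    refine ⟨Set.range f, Set.countable_range f, ?_, ?_, ?_⟩
    · intro y hy
      obtain ⟨U, hUm, hyU⟩ := hcovF hy
      obtain ⟨i, hi⟩ := Set.mem_iUnion.mp (hcov ⟨U, hUm⟩ ⟨hy, hyU⟩)
      exact ⟨f ⟨⟨U, hUm⟩, i⟩, Set.mem_range_self _, hi⟩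
    · rintro V ⟨σ, rfl⟩
      rw [hballd σ]
      refine ⟨le_refl _, fun _ => ?_⟩
      rw [show (1:ℝ)/(1:ℝ) = 1 by norm_num, Real.rpow_one]
    · have hKε : K * ε ≤ ε' := by
        have ee : δ ^ (t - s) * δ' ^ (t' - t) = δ ^ (κ/θ) := by
          rw [hδ'def, ← Real.rpow_mul hδ.le, ← Real.rpow_add hδ]
          congr 1
          exact exp_arith hθ.1.ne' ht'def
        have hle1 : δ ^ (κ/θ) ≤ 1 := Real.rpow_le_one hδ.le hδ1 (div_nonneg hκ.le hθ.1.le)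
        have hKP : K ≤ P := by
          calc K = P * (δ ^ (t - s) * δ' ^ (t' - t)) := by rw [hKdef]; ring
            _ = P * δ ^ (κ/θ) := by rw [ee]
            _ ≤ P * 1 := mul_le_mul_of_nonneg_left hle1 hP0.le
            _ = P := mul_one P
        rw [hεdef, ← mul_div_assoc, div_le_iff₀ (by linarith : (0:ℝ) < P + 1)]
        nlinarith [hε'.le, mul_le_mul_of_nonneg_right hKP hε'.le]
      calc ∑' V : ↥(Set.range f), EMetric.diam (V : Set (EuclideanSpace ℝ (Fin n))) ^ t'
          ≤ ∑' σ, EMetric.diam (f σ) ^ t' :=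
            tsum_range_le (fun V => EMetric.diam V ^ t') f
        _ = ∑' σ : (Σ U : ↥𝒰, Fin (m U)), ENNReal.ofReal δ' ^ t' := by
            congr 1; funext σ; rw [hballd σ]
        _ = ∑' U : ↥𝒰, ∑' _i : Fin (m U), ENNReal.ofReal δ' ^ t' :=
            ENNReal.tsum_sigma' _
        _ = ∑' U : ↥𝒰, (m U : ℝ≥0∞) * ENNReal.ofReal δ' ^ t' := by
            congr 1; funext U
            rw [tsum_fintype]
            simp [Finset.sum_const, nsmul_eq_mul]
        _ ≤ ∑' U : ↥𝒰, ENNReal.ofReal K *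
              EMetric.diam (U : Set (EuclideanSpace ℝ (Fin n))) ^ s :=
            ENNReal.tsum_le_tsum hbd
        _ = ENNReal.ofReal K * ∑' U : ↥𝒰,
              EMetric.diam (U : Set (EuclideanSpace ℝ (Fin n))) ^ s :=
            ENNReal.tsum_mul_left
        _ ≤ ENNReal.ofReal K * ENNReal.ofReal ε := mul_le_mul_right hsum _
        _ = ENNReal.ofReal (K * ε) := (ENNReal.ofReal_mul hK0.le).symm
        _ ≤ ENNReal.ofReal ε' := ENNReal.ofReal_le_ofReal hKε
  have : B ≤ t' := by
    rw [hB]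
    show lowerInterDim 1 F ≤ t'
    rw [lowerInterDim_eq]
    exact csInf_le (SL_bddBelow 1 F) hmem
  linarith
theorem stmt13 (n : ℕ) (F : Set (EuclideanSpace ℝ (Fin n)))
    (hF : Bornology.IsBounded F) (h : lowerBoxDim F = assouadDim F)
    (θ : ℝ) (hθ : θ ∈ Set.Ioc (0:ℝ) 1) :
    lowerInterDim θ F = lowerBoxDim F ∧ upperInterDim θ F = lowerBoxDim F := by
  rcases F.eq_empty_or_nonempty with rfl | hFne
  · have hbox : lowerBoxDim (∅ : Set (EuclideanSpace ℝ (Fin n))) = 0 :=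
      (dims_of_empty 1).1
    rw [hbox, (dims_of_empty θ).1, (dims_of_empty θ).2]
    exact ⟨rfl, rfl⟩
  rcases Nat.eq_zero_or_pos n with hn0 | hn
  · subst hn0
    have h1 := dims_of_dim_zero hFne hθ
    have h2 := dims_of_dim_zero hFne (⟨one_pos, le_refl 1⟩ : (1:ℝ) ∈ Set.Ioc (0:ℝ) 1)
    have hbox : lowerBoxDim F = 0 := h2.1
    rw [hbox, h1.1, h1.2]
    exact ⟨rfl, rfl⟩
  -- main case : `n ≥ 1`, `F` nonempty
  have hBlow : lowerBoxDim F ≤ lowerInterDim θ F := box_le_lowerInter hn hF h hθ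
  have hmemSU : ((n : ℝ) + 1) ∈ SU θ F :=
    ⟨by positivity, upper_mem_of_assouad hn hF (by positivity) (grid_assouadProp F) hθ
      (Nat.cast_nonneg n) (lt_add_one _)⟩
  have hLU : lowerInterDim θ F ≤ upperInterDim θ F := by
    rw [lowerInterDim_eq, upperInterDim_eq]
    exact csInf_le_csInf (SL_bddBelow θ F) ⟨(n : ℝ) + 1, hmemSU⟩ (SU_subset_SL θ F)
  have hUA : upperInterDim θ F ≤ assouadDim F := by
    rw [upperInterDim_eq, assouadDim_eq]
    apply le_csInf ⟨(n : ℝ), assouad_nonempty F⟩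
    rintro t ⟨ht0, C, hC, hw⟩
    by_contra hlt
    push_neg at hlt
    obtain ⟨u, htu, huI⟩ := exists_between hlt
    have humem : u ∈ SU θ F :=
      ⟨le_trans ht0 htu.le, upper_mem_of_assouad hn hF hC hw hθ ht0 htu⟩
    exact absurd (csInf_le (SU_bddBelow θ F) humem) (not_le.mpr huI)
  constructor
  · exact le_antisymm (hLU.trans (hUA.trans_eq h.symm)) hBlow
  · exact le_antisymm (hUA.trans_eq h.symm) (hBlow.trans hLU)
end

section
/- For p > 0 let F_p = {0} ∪ {1/k^p : k ∈ ℕ, k ≥ 1} ⊆ ℝ. Then for all θ ∈ [0,1], the lower and upper θ-intermediate dimensions of F_p both equal θ/(p+θ). -/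
open Set Metric MeasureTheory ENNReal

set_option maxHeartbeats 1000000

lemma sInf_eq_of_dim {A : Set ℝ} {d : ℝ} (hd : 0 ≤ d) (h1 : ∀ s, d < s → s ∈ A)
    (h2 : ∀ s ∈ A, d ≤ s) : sInf A = d := by
  apply le_antisymm
  · apply _root_.le_of_forall_pos_le_add
    intro ε hε
    exact csInf_le ⟨d, fun x hx => h2 x hx⟩ (h1 (d+ε) (by linarith))
  · exact le_csInf ⟨d+1, h1 (d+1) (by linarith)⟩ h2

lemma singleton_cover {F : Set ℝ} (hF : F.Countable) (δ s ε : ℝ) (hs : 0 < s) :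
    interCoverSum 0 δ s ε F := by
  refine ⟨(fun x => ({x} : Set ℝ)) '' F, hF.image _, ?_, ?_, ?_⟩
  · intro x hx
    exact ⟨{x}, ⟨x, hx, rfl⟩, rfl⟩
  · rintro U ⟨x, hx, rfl⟩
    rw [EMetric.diam, EMetric.diam_singleton]
    exact ⟨zero_le, fun h => absurd rfl h⟩
  · have hz : ∀ U : ↥((fun x => ({x}:Set ℝ)) '' F), EMetric.diam (U : Set ℝ) ^ s = 0 := by
      rintro ⟨U, x, hx, rfl⟩
      rw [EMetric.diam, EMetric.diam_singleton, ENNReal.zero_rpow_of_pos hs]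
    rw [tsum_congr hz, tsum_zero]
    exact zero_le

lemma F_countable (p : ℝ) :
    (insert (0:ℝ) {x | ∃ k : ℕ, 1 ≤ k ∧ x = 1 / (k : ℝ) ^ p}).Countable := by
  apply Set.Countable.insert
  have h : {x : ℝ | ∃ k : ℕ, 1 ≤ k ∧ x = 1 / (k : ℝ) ^ p}
      ⊆ Set.range (fun k : ℕ => 1 / (k:ℝ) ^ p) := by
    rintro x ⟨k, _, rfl⟩
    exact ⟨k, rfl⟩
  exact (Set.countable_range _).mono h

lemma sum_image_le' {ι α : Type*} [DecidableEq α] (t : Finset ι) (g : ι → α) (f : α → ℝ≥0∞) :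
    ∑ x ∈ t.image g, f x ≤ ∑ i ∈ t, f (g i) := by
  classical
  induction t using Finset.induction with
  | empty => simp
  | insert a s ha ih =>
    rw [Finset.image_insert, Finset.sum_insert ha]
    by_cases h : g a ∈ s.image g
    · rw [Finset.insert_eq_self.mpr h]
      exact le_add_of_nonneg_of_le zero_le ih
    · rw [Finset.sum_insert h]; exact add_le_add le_rfl ih

lemma tsum_image_le {ι X : Type*} (g : ι → Set X) (t : Finset ι) (f : Set X → ℝ≥0∞) :
    ∑' U : ↥(g '' (t : Set ι)), f ↑U ≤ ∑ i ∈ t, f (g i) := by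
  classical
  rw [show g '' (t : Set ι) = ↑(t.image g) from (Finset.coe_image).symm,
    Finset.tsum_subtype']
  exact sum_image_le' t g f

lemma upper_cover (p : ℝ) (hp : 0 < p) (θ : ℝ) (hθ0 : 0 < θ) (hθ1 : θ ≤ 1)
    (s : ℝ) (hs : θ/(p+θ) < s) (ε : ℝ) (hε : 0 < ε) :
    ∃ δ₀ > 0, ∀ δ, 0 < δ → δ ≤ δ₀ →
      interCoverSum θ δ s ε (insert (0:ℝ) {x | ∃ k : ℕ, 1 ≤ k ∧ x = 1 / (k : ℝ) ^ p}) := by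
  classical
  have hpθ : 0 < p + θ := by linarith
  have hs0 : 0 < s := lt_of_le_of_lt (div_nonneg hθ0.le hpθ.le) hs
  set γ : ℝ := (p*s + s*θ - θ)/(θ*(p+1)) with hγdef
  set a : ℝ := (θ + s - s*θ)/(θ*(p+1)) with hadef
  have hθp1 : 0 < θ*(p+1) := by positivity
  have hγ : 0 < γ := by
    apply div_pos _ hθp1
    have := (div_lt_iff₀ hpθ).mp hs
    nlinarith
  have ha : 0 < a := by
    apply div_pos _ hθp1
    nlinarith
  set m : ℝ := min γ s with hmdef
  have hm : 0 < m := lt_min hγ hs0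
  refine ⟨min 1 ((ε/4) ^ (1/m)), by positivity, fun δ hδ0 hδ1 => ?_⟩
  have hδle1 : δ ≤ 1 := le_trans hδ1 (min_le_left _ _)
  have hδleε : δ ≤ (ε/4) ^ (1/m) := le_trans hδ1 (min_le_right _ _)
  set b : ℝ := δ ^ (1/θ) with hbdef
  have hb0 : 0 < b := Real.rpow_pos_of_pos hδ0 _
  have hbδ : b ≤ δ := by
    have h1θ : (1:ℝ) ≤ 1/θ := by rw [le_div_iff₀ hθ0]; linarith
    calc b = δ ^ (1/θ) := rfl
    _ ≤ δ ^ (1:ℝ) := Real.rpow_le_rpow_of_exponent_ge hδ0 hδle1 h1θ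
    _ = δ := Real.rpow_one δ
  set T : ℝ := δ ^ (-a) with hTdef
  have hT0 : 0 < T := Real.rpow_pos_of_pos hδ0 _
  have hT1 : 1 ≤ T := by
    calc (1:ℝ) = δ ^ (0:ℝ) := (Real.rpow_zero δ).symm
    _ ≤ δ ^ (-a) := Real.rpow_le_rpow_of_exponent_ge hδ0 hδle1 (by linarith)
  set N : ℕ := ⌈T⌉₊ with hNdef
  have hN1 : 1 ≤ N := Nat.one_le_ceil_iff.mpr hT0
  have hTN : T ≤ (N:ℝ) := Nat.le_ceil T
  have hN0 : (0:ℝ) < N := lt_of_lt_of_le hT0 hTN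
  have hNT : (N:ℝ) ≤ T + 1 := (Nat.ceil_lt_add_one hT0.le).le
  set M : ℕ := ⌈(N:ℝ)^(-p)/δ⌉₊ with hMdef
  have hMarg : 0 < (N:ℝ)^(-p)/δ := by positivity
  have hM1 : 1 ≤ M := Nat.one_le_ceil_iff.mpr hMarg
  have hMge : (N:ℝ)^(-p)/δ ≤ (M:ℝ) := Nat.le_ceil _
  have hMle : (M:ℝ) ≤ (N:ℝ)^(-p)/δ + 1 := (Nat.ceil_lt_add_one hMarg.le).le
  set gA : ℕ → Set ℝ := fun k => Icc (1/(k:ℝ)^p) (1/(k:ℝ)^p + b) with hgA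
  set gB : ℕ → Set ℝ := fun j => Icc ((j:ℝ)*δ) ((j:ℝ)*δ + δ) with hgB
  set g : ℕ ⊕ ℕ → Set ℝ := Sum.elim gA gB with hg
  set t : Finset (ℕ ⊕ ℕ) := (Finset.Icc 1 N).disjSum (Finset.range M) with ht
  refine ⟨g '' (t : Set (ℕ ⊕ ℕ)), (t.finite_toSet.image g).countable, ?_, ?_, ?_⟩
  · -- cover
    intro x hx
    rcases hx with rfl | ⟨k, hk, rfl⟩
    · refine ⟨g (Sum.inr 0), ⟨Sum.inr 0, ?_, rfl⟩, ?_⟩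
      · exact Finset.mem_coe.mpr (Finset.inr_mem_disjSum.mpr (Finset.mem_range.mpr (by omega)))
      · simp only [hg, hgB, Sum.elim_inr, Nat.cast_zero, zero_mul]
        exact ⟨le_rfl, by linarith⟩
    · by_cases hkN : k ≤ N
      · refine ⟨g (Sum.inl k), ⟨Sum.inl k, ?_, rfl⟩, ?_⟩
        · exact Finset.mem_coe.mpr (Finset.inl_mem_disjSum.mpr (Finset.mem_Icc.mpr ⟨hk, hkN⟩))
        · simp only [hg, hgA, Sum.elim_inl]
          exact ⟨le_rfl, by linarith⟩
      · push_neg at hkN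
        have hk0 : (0:ℝ) < (k:ℝ) := by exact_mod_cast hk
        set x : ℝ := 1/(k:ℝ)^p with hxdef
        have hx0 : 0 < x := by positivity
        have hxle : x ≤ (N:ℝ)^(-p) := by
          rw [hxdef, Real.rpow_neg hN0.le, one_div]
          apply inv_anti₀ (Real.rpow_pos_of_pos hN0 p)
          exact Real.rpow_le_rpow hN0.le (by exact_mod_cast hkN.le) hp.le
        have hxM : x ≤ (M:ℝ)*δ := by
          calc x ≤ (N:ℝ)^(-p) := hxle
          _ = ((N:ℝ)^(-p)/δ) * δ := by field_simp
          _ ≤ (M:ℝ)*δ := by apply mul_le_mul_of_nonneg_right hMge hδ0.le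
        set j : ℕ := min ⌊x/δ⌋₊ (M-1) with hjdef
        have hjM : j < M := lt_of_le_of_lt (min_le_right _ _) (by omega)
        refine ⟨g (Sum.inr j), ⟨Sum.inr j, ?_, rfl⟩, ?_⟩
        · exact Finset.mem_coe.mpr (Finset.inr_mem_disjSum.mpr (Finset.mem_range.mpr hjM))
        · simp only [hg, hgB, Sum.elim_inr]
          rcases le_or_gt ⌊x/δ⌋₊ (M-1) with hc | hc
          · have hj : j = ⌊x/δ⌋₊ := min_eq_left hc
            constructor
            · rw [hj]
              calc (⌊x/δ⌋₊:ℝ) * δ ≤ (x/δ) * δ := by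
                    apply mul_le_mul_of_nonneg_right (Nat.floor_le (by positivity)) hδ0.le
              _ = x := by field_simp
            · rw [hj]
              have := Nat.lt_floor_add_one (x/δ)
              have h2 : x/δ ≤ (⌊x/δ⌋₊:ℝ) + 1 := this.le
              calc x = (x/δ) * δ := by field_simp
              _ ≤ ((⌊x/δ⌋₊:ℝ) + 1) * δ := by apply mul_le_mul_of_nonneg_right h2 hδ0.le
              _ = (⌊x/δ⌋₊:ℝ)*δ + δ := by ring
          · have hj : j = M - 1 := min_eq_right hc.le
            have hMfloor : (M:ℝ) ≤ ⌊x/δ⌋₊ := by exact_mod_cast (by omega : M ≤ ⌊x/δ⌋₊)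
            have hxMδ : (M:ℝ)*δ ≤ x := by
              have h1 : (⌊x/δ⌋₊:ℝ) ≤ x/δ := Nat.floor_le (by positivity)
              have : (M:ℝ) ≤ x/δ := le_trans hMfloor h1
              calc (M:ℝ)*δ ≤ (x/δ)*δ := mul_le_mul_of_nonneg_right this hδ0.le
              _ = x := by field_simp
            have hcast : ((M-1:ℕ):ℝ) = (M:ℝ) - 1 := by
              have : (1:ℕ) ≤ M := hM1
              push_cast [Nat.cast_sub this]; ring
            rw [hj, hcast]
            have he1 : ((M:ℝ)-1)*δ = (M:ℝ)*δ - δ := by ring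
            have he2 : ((M:ℝ)-1)*δ + δ = (M:ℝ)*δ := by ring
            constructor
            · rw [he1]; linarith
            · rw [he2]; exact hxM
  · -- diameters
    rintro U ⟨i, hi, rfl⟩
    rcases i with k | j
    · simp only [hg, hgA, Sum.elim_inl]
      rw [EMetric.diam, Real.ediam_Icc, add_sub_cancel_left]
      exact ⟨ENNReal.ofReal_le_ofReal hbδ, fun _ => le_rfl⟩
    · simp only [hg, hgB, Sum.elim_inr]
      rw [EMetric.diam, Real.ediam_Icc, add_sub_cancel_left]
      exact ⟨le_rfl, fun _ => ENNReal.ofReal_le_ofReal hbδ⟩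
  · -- sum
    refine le_trans (tsum_image_le g t (fun U => EMetric.diam U ^ s)) ?_
    rw [ht, Finset.sum_disjSum]
    have hA : ∀ k ∈ Finset.Icc 1 N, EMetric.diam (g (Sum.inl k)) ^ s = ENNReal.ofReal (b^s) := by
      intro k _
      simp only [hg, hgA, Sum.elim_inl]
      rw [EMetric.diam, Real.ediam_Icc, add_sub_cancel_left, ENNReal.ofReal_rpow_of_pos hb0]
    have hB : ∀ j ∈ Finset.range M, EMetric.diam (g (Sum.inr j)) ^ s = ENNReal.ofReal (δ^s) := by
      intro j _
      simp only [hg, hgB, Sum.elim_inr]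
      rw [EMetric.diam, Real.ediam_Icc, add_sub_cancel_left, ENNReal.ofReal_rpow_of_pos hδ0]
    rw [Finset.sum_congr rfl hA, Finset.sum_congr rfl hB, Finset.sum_const, Finset.sum_const,
      Nat.card_Icc, Finset.card_range]
    have hcard : N + 1 - 1 = N := by omega
    rw [hcard]
    -- now: N • ofReal (b^s) + M • ofReal (δ^s) ≤ ofReal ε
    rw [nsmul_eq_mul, nsmul_eq_mul]
    have h1 : (N:ℝ≥0∞) * ENNReal.ofReal (b^s) = ENNReal.ofReal ((N:ℝ) * b^s) := by
      rw [ENNReal.ofReal_mul (by positivity)]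
      congr 1
      exact (ENNReal.ofReal_natCast N).symm
    have h2 : (M:ℝ≥0∞) * ENNReal.ofReal (δ^s) = ENNReal.ofReal ((M:ℝ) * δ^s) := by
      rw [ENNReal.ofReal_mul (by positivity)]
      congr 1
      exact (ENNReal.ofReal_natCast M).symm
    rw [h1, h2, ← ENNReal.ofReal_add (by positivity) (by positivity)]
    apply ENNReal.ofReal_le_ofReal
    -- real inequality
    have hbs : b^s = δ^(s/θ) := by
      rw [hbdef, ← Real.rpow_mul hδ0.le]
      congr 1; field_simp
    have hkey1 : (N:ℝ) * b^s ≤ 2 * δ^γ := by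
      have hN2T : (N:ℝ) ≤ 2*T := by linarith
      calc (N:ℝ) * b^s ≤ (2*T) * δ^(s/θ) := by
            rw [hbs]
            apply mul_le_mul_of_nonneg_right hN2T (by positivity)
      _ = 2 * (δ^(-a) * δ^(s/θ)) := by rw [hTdef]; ring
      _ = 2 * δ^(-a + s/θ) := by rw [← Real.rpow_add hδ0]
      _ = 2 * δ^γ := by
            have hexp : -a + s/θ = γ := by
              rw [hγdef, hadef]; field_simp; ring
            rw [hexp]
    have hTp : T^(-p) = δ^(a*p) := by
      rw [hTdef, ← Real.rpow_mul hδ0.le]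
      congr 1; ring
    have hNp : (N:ℝ)^(-p) ≤ δ^(a*p) := by
      rw [← hTp]
      exact Real.rpow_le_rpow_of_nonpos hT0 hTN (by linarith)
    have hkey2 : (M:ℝ) * δ^s ≤ δ^γ + δ^s := by
      have hMb : (M:ℝ) ≤ δ^(a*p)/δ + 1 := by
        apply le_trans hMle
        apply add_le_add_left
        exact div_le_div_of_nonneg_right hNp hδ0.le
      calc (M:ℝ) * δ^s ≤ (δ^(a*p)/δ + 1) * δ^s := by
            apply mul_le_mul_of_nonneg_right hMb (by positivity)
      _ = δ^(a*p)/δ * δ^s + δ^s := by ring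
      _ = δ^γ + δ^s := by
            have h3 : δ^(a*p)/δ * δ^s = δ^(a*p - 1 + s) := by
              rw [div_mul_eq_mul_div, ← Real.rpow_add hδ0,
                show a*p - 1 + s = (a*p + s) - 1 by ring,
                Real.rpow_sub hδ0, Real.rpow_one]
            have hexp : a*p - 1 + s = γ := by
              rw [hγdef, hadef]; field_simp; ring
            rw [h3, hexp]
    have hγm : δ^γ ≤ δ^m := Real.rpow_le_rpow_of_exponent_ge hδ0 hδle1 (min_le_left _ _)
    have hsm : δ^s ≤ δ^m := Real.rpow_le_rpow_of_exponent_ge hδ0 hδle1 (min_le_right _ _)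
    have hδm : δ^m ≤ ε/4 := by
      calc δ^m ≤ ((ε/4) ^ (1/m))^m := Real.rpow_le_rpow hδ0.le hδleε hm.le
      _ = (ε/4) ^ ((1/m)*m) := by rw [← Real.rpow_mul (by positivity)]
      _ = ε/4 := by rw [one_div, inv_mul_cancel₀ hm.ne', Real.rpow_one]
    nlinarith [hkey1, hkey2, hγm, hsm, hδm]

lemma gap_ge (p : ℝ) (hp : 0 < p) (k : ℕ) (hk : 1 ≤ k) :
    p * ((k:ℝ)+1) ^ (-(p+1)) ≤ 1 / (k:ℝ) ^ p - 1 / ((k:ℝ)+1) ^ p := by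
  have hk0 : (0:ℝ) < (k:ℝ) := by exact_mod_cast hk
  have hlt : (k:ℝ) < (k:ℝ)+1 := by linarith
  obtain ⟨c, hc, hceq⟩ := exists_hasDerivAt_eq_slope (fun x : ℝ => x ^ (-p))
      (fun x : ℝ => (-p) * x ^ (-p-1)) hlt
      (fun x hx => by
        have hx0 : x ≠ 0 := by have := hx.1; intro h; rw [h] at this; linarith
        exact (Real.hasDerivAt_rpow_const (Or.inl hx0)).continuousAt.continuousWithinAt)
      (fun x hx => by
        have hx0 : x ≠ 0 := by have := hx.1; intro h; rw [h] at this; linarith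
        exact Real.hasDerivAt_rpow_const (Or.inl hx0))
  have hc0 : 0 < c := lt_trans hk0 hc.1
  have h1 : ((k:ℝ)+1) ^ (-p) - (k:ℝ) ^ (-p) = (-p) * c ^ (-p-1) := by
    rw [hceq]; field_simp; ring
  have h2 : ((k:ℝ)+1) ^ (-(p+1)) ≤ c ^ (-(p+1)) :=
    Real.rpow_le_rpow_of_nonpos hc0 hc.2.le (by linarith)
  have h3 : 1 / (k:ℝ) ^ p = (k:ℝ) ^ (-p) := by
    rw [Real.rpow_neg hk0.le, one_div]
  have h4 : 1 / ((k:ℝ)+1) ^ p = ((k:ℝ)+1) ^ (-p) := by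
    rw [Real.rpow_neg (by linarith), one_div]
  rw [h3, h4]
  have he : -p-1 = -(p+1) := by ring
  rw [he] at h1
  nlinarith [h2, hp]

lemma telescope_ge (f : ℕ → ℝ) (g : ℝ) (m M : ℕ) (hmM : m ≤ M)
    (h : ∀ k, m ≤ k → k < M → g ≤ f k - f (k+1)) :
    ((M:ℝ) - (m:ℝ)) * g ≤ f m - f M := by
  induction M, hmM using Nat.le_induction with
  | base => simp
  | succ n hn ih =>
    have h1 := h n hn (by omega)
    have h2 := ih (fun k hk hk' => h k hk (by omega))
    push_cast
    push_cast at h2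
    nlinarith [h1, h2]

lemma lower_no_cover (p : ℝ) (hp : 0 < p) (θ : ℝ) (hθ0 : 0 < θ) (hθ1 : θ ≤ 1)
    (s : ℝ) (hs0 : 0 ≤ s) (hs : s < θ/(p+θ)) :
    ∃ δ₀ > 0, ∀ δ, 0 < δ → δ ≤ δ₀ →
      ¬ interCoverSum θ δ s 1 (insert (0:ℝ) {x | ∃ k : ℕ, 1 ≤ k ∧ x = 1 / (k : ℝ) ^ p}) := by
  classical
  have hpθ : 0 < p + θ := by linarith
  have hs1 : s < 1 := lt_of_lt_of_le hs (by rw [div_le_one hpθ]; linarith)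
  have hθp1 : 0 < θ*(p+1) := by positivity
  set a : ℝ := (θ + s - s*θ)/(θ*(p+1)) with hadef
  have ha : 0 < a := by apply div_pos _ hθp1; nlinarith
  set γ' : ℝ := (p*s + s*θ - θ)/(θ*(p+1)) with hγdef
  have hγ' : γ' < 0 := by
    apply div_neg_of_neg_of_pos _ hθp1
    have := (lt_div_iff₀ hpθ).mp hs
    nlinarith
  have hγa : s/θ - a = γ' := by rw [hadef, hγdef]; field_simp; ring
  set C : ℝ := 1 + (3:ℝ)^(p+1)/p with hCdef
  have hC : 0 < C := by
    have h1 : (0:ℝ) < (3:ℝ)^(p+1) := Real.rpow_pos_of_pos (by norm_num) _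
    have h2 : (0:ℝ) < (3:ℝ)^(p+1)/p := by positivity
    rw [hCdef]; linarith
  have h2C : (0:ℝ) < 2*C := by linarith
  refine ⟨min 1 ((2*C) ^ (1/γ')), by positivity, fun δ hδ0 hδ1 => ?_⟩
  rintro ⟨𝒰, hcnt, hcov, hdiam, hsum⟩
  have hδle1 : δ ≤ 1 := le_trans hδ1 (min_le_left _ _)
  have hδle2 : δ ≤ (2*C) ^ (1/γ') := le_trans hδ1 (min_le_right _ _)
  have hδγ : 2*C ≤ δ^γ' := by
    have h := Real.rpow_le_rpow_of_nonpos hδ0 hδle2 hγ'.le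
    rwa [← Real.rpow_mul h2C.le, one_div, inv_mul_cancel₀ hγ'.ne, Real.rpow_one] at h
  set b : ℝ := δ ^ (1/θ) with hbdef
  have hb0 : 0 < b := Real.rpow_pos_of_pos hδ0 _
  set K : ℕ := ⌈δ^(-a)⌉₊ with hKdef
  have hδa0 : 0 < δ^(-a) := Real.rpow_pos_of_pos hδ0 _
  have hδa1 : 1 ≤ δ^(-a) := by
    calc (1:ℝ) = δ ^ (0:ℝ) := (Real.rpow_zero δ).symm
    _ ≤ δ ^ (-a) := Real.rpow_le_rpow_of_exponent_ge hδ0 hδle1 (by linarith)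
  have hK1 : 1 ≤ K := Nat.one_le_ceil_iff.mpr hδa0
  have hKge : δ^(-a) ≤ (K:ℝ) := Nat.le_ceil _
  have hKle : (K:ℝ) ≤ δ^(-a) + 1 := (Nat.ceil_lt_add_one hδa0.le).le
  have hK3 : (K:ℝ) + 1 ≤ 3*δ^(-a) := by linarith
  set gK : ℝ := p * ((K:ℝ)+1)^(-(p+1)) with hgKdef
  have hK0 : (0:ℝ) < (K:ℝ)+1 := by positivity
  have hgK0 : 0 < gK := by
    have := Real.rpow_pos_of_pos hK0 (-(p+1))
    positivity
  -- choose covering sets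
  have hex : ∀ k : ℕ, ∃ U : Set ℝ, 1 ≤ k → U ∈ 𝒰 ∧ 1/(k:ℝ)^p ∈ U := by
    intro k
    by_cases hk : 1 ≤ k
    · obtain ⟨U, hU, hxU⟩ := mem_sUnion.1 (hcov (Or.inr ⟨k, hk, rfl⟩))
      exact ⟨U, fun _ => ⟨hU, hxU⟩⟩
    · exact ⟨∅, fun h => absurd h hk⟩
  choose φ hφ using hex
  set t' : Finset (Set ℝ) := (Finset.Icc 1 K).image φ with ht'
  have hUfacts : ∀ U ∈ t', U ∈ 𝒰 := by
    intro U hU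
    obtain ⟨k₀, hk₀, rfl⟩ := Finset.mem_image.1 hU
    exact (hφ k₀ (Finset.mem_Icc.1 hk₀).1).1
  have hdne : ∀ U ∈ 𝒰, EMetric.diam U ≠ ⊤ :=
    fun U hU => ne_top_of_le_ne_top ofReal_ne_top (hdiam U hU).1
  have hdb : ∀ U ∈ 𝒰, b ≤ (EMetric.diam U).toReal :=
    fun U hU => (ENNReal.ofReal_le_iff_le_toReal (hdne U hU)).1 ((hdiam U hU).2 hθ0.ne')
  have hdδ : ∀ U ∈ 𝒰, (EMetric.diam U).toReal ≤ δ := by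
    intro U hU
    have h := ENNReal.toReal_mono ofReal_ne_top (hdiam U hU).1
    rwa [ENNReal.toReal_ofReal hδ0.le] at h
  -- fiber bound
  set B : ℝ := b^(-s) + δ^(1-s) * (((K:ℝ)+1)^(p+1)/p) with hBdef
  have hB0 : 0 ≤ B := by
    have h1 : (0:ℝ) < b^(-s) := Real.rpow_pos_of_pos hb0 _
    have h2 : (0:ℝ) < ((K:ℝ)+1)^(p+1) := Real.rpow_pos_of_pos hK0 _
    have h3 : (0:ℝ) < δ^(1-s) := Real.rpow_pos_of_pos hδ0 _
    positivity
  have hfib : ∀ U ∈ t', ((Finset.filter (fun k => φ k = U) (Finset.Icc 1 K)).card : ℝ)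
      ≤ (EMetric.diam U).toReal ^ s * B := by
    intro U hU
    have hU𝒰 := hUfacts U hU
    set d : ℝ := (EMetric.diam U).toReal with hddef
    have hd_b : b ≤ d := hdb U hU𝒰
    have hd_δ : d ≤ δ := hdδ U hU𝒰
    have hd0 : 0 < d := lt_of_lt_of_le hb0 hd_b
    set S : Finset ℕ := Finset.filter (fun k => φ k = U) (Finset.Icc 1 K) with hSdef
    have hcard : (S.card : ℝ) ≤ 1 + d / gK := by
      rcases S.eq_empty_or_nonempty with hS | hS
      · rw [hS]; simp; positivity
      · set mm : ℕ := S.min' hS with hmm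
        set MM : ℕ := S.max' hS with hMM
        have hmmS : mm ∈ S := Finset.min'_mem _ _
        have hMMS : MM ∈ S := Finset.max'_mem _ _
        have hmm1 : 1 ≤ mm := (Finset.mem_Icc.1 (Finset.mem_filter.1 hmmS).1).1
        have hMMK : MM ≤ K := (Finset.mem_Icc.1 (Finset.mem_filter.1 hMMS).1).2
        have hmmMM : mm ≤ MM := Finset.min'_le _ _ hMMS
        have hxmm : 1/(mm:ℝ)^p ∈ U := by
          have := (hφ mm hmm1).2
          rwa [(Finset.mem_filter.1 hmmS).2] at this
        have hxMM : 1/(MM:ℝ)^p ∈ U := by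
          have := (hφ MM (le_trans hmm1 hmmMM)).2
          rwa [(Finset.mem_filter.1 hMMS).2] at this
        have hsub : S ⊆ Finset.Icc mm MM :=
          fun k hk => Finset.mem_Icc.mpr ⟨Finset.min'_le S k hk, Finset.le_max' S k hk⟩
        have h1 : S.card ≤ MM + 1 - mm := by
          have := Finset.card_le_card hsub
          rwa [Nat.card_Icc] at this
        have h1' : (S.card : ℝ) ≤ (MM:ℝ) - (mm:ℝ) + 1 := by
          have hle : mm ≤ MM + 1 := by omega
          have h2 := (Nat.cast_le (α := ℝ)).2 h1
          rw [Nat.cast_sub hle, Nat.cast_add, Nat.cast_one] at h2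
          linarith
        have htel : ((MM:ℝ) - (mm:ℝ)) * gK ≤ 1/(mm:ℝ)^p - 1/(MM:ℝ)^p := by
          apply telescope_ge (fun k : ℕ => 1/(k:ℝ)^p) gK mm MM hmmMM
          intro k hk hk'
          have hk1 : 1 ≤ k := le_trans hmm1 hk
          have hgap := gap_ge p hp k hk1
          have hmono : ((K:ℝ)+1)^(-(p+1)) ≤ ((k:ℝ)+1)^(-(p+1)) := by
            apply Real.rpow_le_rpow_of_nonpos (by positivity) _ (by linarith)
            have : (k:ℝ) ≤ (K:ℝ) := by exact_mod_cast le_trans (le_of_lt hk') hMMK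
            linarith
          have hcast : (((k+1:ℕ)):ℝ) = (k:ℝ)+1 := by push_cast; ring
          calc gK = p * ((K:ℝ)+1)^(-(p+1)) := rfl
          _ ≤ p * ((k:ℝ)+1)^(-(p+1)) := mul_le_mul_of_nonneg_left hmono hp.le
          _ ≤ 1/(k:ℝ)^p - 1/((k:ℝ)+1)^p := hgap
          _ = 1/(k:ℝ)^p - 1/(((k+1:ℕ)):ℝ)^p := by rw [hcast]
        have hdist : 1/(mm:ℝ)^p - 1/(MM:ℝ)^p ≤ d := by
          have h := EMetric.edist_le_diam_of_mem hxmm hxMM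
          rw [edist_dist] at h
          have h2 := (ENNReal.ofReal_le_iff_le_toReal (hdne U hU𝒰)).1 h
          calc 1/(mm:ℝ)^p - 1/(MM:ℝ)^p ≤ |1/(mm:ℝ)^p - 1/(MM:ℝ)^p| := le_abs_self _
          _ = dist (1/(mm:ℝ)^p) (1/(MM:ℝ)^p) := (Real.dist_eq _ _).symm
          _ ≤ d := h2
        have hMd : ((MM:ℝ) - (mm:ℝ)) ≤ d / gK := by
          rw [le_div_iff₀ hgK0]
          linarith
        linarith
    -- now convert
    have h1d : 1 ≤ d^s * b^(-s) := by
      have hbs : b^s ≤ d^s := Real.rpow_le_rpow hb0.le hd_b hs0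
      have hbs0 : 0 < b^s := Real.rpow_pos_of_pos hb0 _
      rw [Real.rpow_neg hb0.le, ← div_eq_mul_inv]
      exact (one_le_div hbs0).mpr hbs
    have h2d : d / gK ≤ d^s * (δ^(1-s) * (((K:ℝ)+1)^(p+1)/p)) := by
      have hd_eq : d = d^s * d^(1-s) := by
        rw [← Real.rpow_add hd0, show s+(1-s)=1 by ring, Real.rpow_one]
      have hd1s : d^(1-s) ≤ δ^(1-s) := Real.rpow_le_rpow hd0.le hd_δ (by linarith)
      have hgKinv : 1/gK = ((K:ℝ)+1)^(p+1)/p := by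
        rw [hgKdef, Real.rpow_neg hK0.le]
        field_simp
      have hds0 : 0 ≤ d^s := (Real.rpow_pos_of_pos hd0 s).le
      calc d / gK = (d^s * d^(1-s)) * (1/gK) := by rw [← hd_eq]; ring
      _ ≤ (d^s * δ^(1-s)) * (1/gK) := by
            apply mul_le_mul_of_nonneg_right _ (by positivity)
            exact mul_le_mul_of_nonneg_left hd1s hds0
      _ = d^s * (δ^(1-s) * (((K:ℝ)+1)^(p+1)/p)) := by rw [hgKinv]; ring
    have hds0 : 0 ≤ d^s := (Real.rpow_pos_of_pos hd0 s).le
    calc ((S.card : ℕ) : ℝ) ≤ 1 + d / gK := hcard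
    _ ≤ d^s * b^(-s) + d^s * (δ^(1-s) * (((K:ℝ)+1)^(p+1)/p)) := by linarith
    _ = d^s * B := by rw [hBdef]; ring
  -- sum bound
  have hsum' : ∑ U ∈ t', (EMetric.diam U).toReal ^ s ≤ 1 := by
    have h1 : ∀ U ∈ t', ENNReal.ofReal ((EMetric.diam U).toReal ^ s) = EMetric.diam U ^ s := by
      intro U hU
      have hd0 : 0 < (EMetric.diam U).toReal := lt_of_lt_of_le hb0 (hdb U (hUfacts U hU))
      rw [← ENNReal.ofReal_rpow_of_pos hd0, ENNReal.ofReal_toReal (hdne U (hUfacts U hU))]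
    have h2 : ∑ U ∈ t', EMetric.diam U ^ s ≤ ENNReal.ofReal 1 := by
      calc ∑ U ∈ t', EMetric.diam U ^ s
          = ∑ U ∈ t', Set.indicator 𝒰 (fun V => EMetric.diam V ^ s) U :=
            Finset.sum_congr rfl (fun U hU => (Set.indicator_of_mem (hUfacts U hU) (fun V => EMetric.diam V ^ s)).symm)
        _ ≤ ∑' U : Set ℝ, Set.indicator 𝒰 (fun V => EMetric.diam V ^ s) U := ENNReal.sum_le_tsum t'
        _ = ∑' U : ↥𝒰, EMetric.diam (U : Set ℝ) ^ s := (tsum_subtype 𝒰 _).symm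
        _ ≤ ENNReal.ofReal 1 := hsum
    apply (ENNReal.ofReal_le_ofReal_iff zero_le_one).1
    rw [ENNReal.ofReal_sum_of_nonneg (fun U _ => Real.rpow_nonneg ENNReal.toReal_nonneg s)]
    calc ∑ U ∈ t', ENNReal.ofReal ((EMetric.diam U).toReal ^ s)
        = ∑ U ∈ t', EMetric.diam U ^ s := Finset.sum_congr rfl h1
      _ ≤ ENNReal.ofReal 1 := h2
  -- combine
  have hKB : (K:ℝ) ≤ B := by
    have h0 : (K:ℝ) = ∑ U ∈ t', ((Finset.filter (fun k => φ k = U) (Finset.Icc 1 K)).card : ℝ) := by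
      have := Finset.card_eq_sum_card_fiberwise
        (f := φ) (s := Finset.Icc 1 K) (t := t') (fun k hk => Finset.mem_image_of_mem φ hk)
      have hKcard : (Finset.Icc 1 K).card = K := by rw [Nat.card_Icc]; omega
      rw [hKcard] at this
      exact_mod_cast congrArg (Nat.cast : ℕ → ℝ) this
    calc (K:ℝ) = ∑ U ∈ t', ((Finset.filter (fun k => φ k = U) (Finset.Icc 1 K)).card : ℝ) := h0
    _ ≤ ∑ U ∈ t', (EMetric.diam U).toReal ^ s * B := Finset.sum_le_sum hfib
    _ = (∑ U ∈ t', (EMetric.diam U).toReal ^ s) * B := (Finset.sum_mul _ _ _).symm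
    _ ≤ 1 * B := mul_le_mul_of_nonneg_right hsum' hB0
    _ = B := one_mul B
  -- final contradiction
  have hx0 : 0 < δ^(-(s/θ)) := Real.rpow_pos_of_pos hδ0 _
  have hbs : b^(-s) = δ^(-(s/θ)) := by
    rw [hbdef, ← Real.rpow_mul hδ0.le]
    congr 1
    field_simp
  have hsecond : δ^(1-s) * (((K:ℝ)+1)^(p+1)/p) ≤ ((3:ℝ)^(p+1)/p) * δ^(-(s/θ)) := by
    have h31 : ((K:ℝ)+1)^(p+1) ≤ (3*δ^(-a))^(p+1) :=
      Real.rpow_le_rpow (by positivity) hK3 (by linarith)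
    have h32 : (3*δ^(-a))^(p+1) = (3:ℝ)^(p+1) * δ^(-a*(p+1)) := by
      rw [Real.mul_rpow (by norm_num) hδa0.le, ← Real.rpow_mul hδ0.le]
    have hexp : 1 - s + (-a*(p+1)) = -(s/θ) := by
      rw [hadef]; field_simp; ring
    calc δ^(1-s) * (((K:ℝ)+1)^(p+1)/p) ≤ δ^(1-s) * ((3:ℝ)^(p+1) * δ^(-a*(p+1))/p) := by
          apply mul_le_mul_of_nonneg_left _ (Real.rpow_pos_of_pos hδ0 _).le
          rw [← h32]
          exact div_le_div_of_nonneg_right h31 hp.le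
    _ = ((3:ℝ)^(p+1)/p) * (δ^(1-s) * δ^(-a*(p+1))) := by ring
    _ = ((3:ℝ)^(p+1)/p) * δ^(-(s/θ)) := by rw [← Real.rpow_add hδ0, hexp]
  have hBC : B ≤ C * δ^(-(s/θ)) := by
    rw [hBdef, hbs, hCdef]
    calc δ^(-(s/θ)) + δ^(1-s) * (((K:ℝ)+1)^(p+1)/p)
        ≤ δ^(-(s/θ)) + ((3:ℝ)^(p+1)/p) * δ^(-(s/θ)) := by linarith [hsecond]
    _ = (1 + (3:ℝ)^(p+1)/p) * δ^(-(s/θ)) := by ring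
  have hKge2 : 2*C*δ^(-(s/θ)) ≤ (K:ℝ) := by
    have hsplit : δ^(-a) = δ^γ' * δ^(-(s/θ)) := by
      rw [← Real.rpow_add hδ0]
      congr 1
      rw [← hγa]; ring
    calc 2*C*δ^(-(s/θ)) ≤ δ^γ' * δ^(-(s/θ)) := by
          apply mul_le_mul_of_nonneg_right hδγ hx0.le
    _ = δ^(-a) := hsplit.symm
    _ ≤ (K:ℝ) := hKge
  have hchain : 2*C*δ^(-(s/θ)) ≤ C*δ^(-(s/θ)) := le_trans hKge2 (le_trans hKB hBC)
  nlinarith [mul_pos hC hx0, hchain]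

theorem stmt15 (p : ℝ) (hp : 0 < p) (θ : ℝ) (hθ : θ ∈ Set.Icc (0:ℝ) 1) :
    lowerInterDim θ (insert (0:ℝ) {x | ∃ k : ℕ, 1 ≤ k ∧ x = 1 / (k : ℝ) ^ p})
        = θ / (p + θ) ∧
    upperInterDim θ (insert (0:ℝ) {x | ∃ k : ℕ, 1 ≤ k ∧ x = 1 / (k : ℝ) ^ p})
        = θ / (p + θ) := by
  classical
  obtain ⟨hθ0, hθ1⟩ := hθ
  set F : Set ℝ := insert (0:ℝ) {x | ∃ k : ℕ, 1 ≤ k ∧ x = 1 / (k : ℝ) ^ p} with hF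
  set SL : Set ℝ := {s : ℝ | 0 ≤ s ∧ ∀ ε > 0, ∀ δ₀ > 0, ∃ δ, 0 < δ ∧ δ ≤ δ₀ ∧ interCoverSum θ δ s ε F} with hSL
  set SU : Set ℝ := {s : ℝ | 0 ≤ s ∧ ∀ ε > 0, ∃ δ₀ > 0, ∀ δ, 0 < δ → δ ≤ δ₀ → interCoverSum θ δ s ε F} with hSU
  have hgoal : lowerInterDim θ F = sInf SL ∧ upperInterDim θ F = sInf SU := ⟨rfl, rfl⟩
  have hsub : SU ⊆ SL := by
    rintro s ⟨hs0, hs⟩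
    refine ⟨hs0, fun ε hε δ₀ hδ₀ => ?_⟩
    obtain ⟨δ₁, hδ₁, hcov⟩ := hs ε hε
    exact ⟨min δ₀ δ₁, lt_min hδ₀ hδ₁, min_le_left _ _,
      hcov _ (lt_min hδ₀ hδ₁) (min_le_right _ _)⟩
  rw [hgoal.1, hgoal.2]
  rcases eq_or_lt_of_le hθ0 with hθz | hθpos
  · -- θ = 0
    have hθz' : θ = 0 := hθz.symm
    subst hθz'
    have hd : (0:ℝ)/(p+0) = 0 := by simp
    rw [hd]
    have hup : ∀ s : ℝ, 0 < s → s ∈ SU := by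
      intro s hs
      exact ⟨hs.le, fun ε hε => ⟨1, one_pos, fun δ hδ0 _ =>
        singleton_cover (F_countable p) δ s ε hs⟩⟩
    constructor
    · exact sInf_eq_of_dim le_rfl (fun s hs => hsub (hup s hs)) (fun s hs => hs.1)
    · exact sInf_eq_of_dim le_rfl (fun s hs => hup s hs) (fun s hs => hs.1)
  · -- θ > 0
    set d : ℝ := θ/(p+θ) with hddef
    have hpθ : 0 < p + θ := by linarith
    have hd0 : 0 ≤ d := div_nonneg hθpos.le hpθ.le
    have hup : ∀ s : ℝ, d < s → s ∈ SU := by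
      intro s hs
      have hs0 : 0 ≤ s := le_trans hd0 hs.le
      refine ⟨hs0, fun ε hε => ?_⟩
      exact upper_cover p hp θ hθpos hθ1 s hs ε hε
    have hlo : ∀ s ∈ SL, d ≤ s := by
      intro s hs
      by_contra hcon
      push_neg at hcon
      obtain ⟨δ₀, hδ₀, hno⟩ := lower_no_cover p hp θ hθpos hθ1 s hs.1 hcon
      obtain ⟨δ, hδ0, hδle, hcov⟩ := hs.2 1 one_pos δ₀ hδ₀
      exact hno δ hδ0 hδle hcov
    constructor
    · exact sInf_eq_of_dim hd0 (fun s hs => hsub (hup s hs)) hlo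
    · exact sInf_eq_of_dim hd0 (fun s hs => hup s hs) (fun s hs => hlo s (hsub hs))
end

section
/- Let F_log = {0} ∪ {1/log(k+1) : k ∈ ℕ, k ≥ 1} ⊆ ℝ. Then for every θ ∈ (0,1] the θ-intermediate dimension of F_log equals 1, while its Hausdorff dimension (the θ = 0 value) is 0; hence θ ↦ dim_θ F_log is discontinuous at θ = 0. -/
open Set Metric MeasureTheory ENNReal

namespace Stmt16
noncomputable section

def Flog : Set ℝ := insert (0:ℝ) {x | ∃ k : ℕ, 1 ≤ k ∧ x = 1 / Real.log (k + 1)}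

def p (k : ℕ) : ℝ := 1 / Real.log (k + 1)

def g (K : ℕ) : ℝ := (((K:ℝ) + 2) * Real.log ((K:ℝ) + 2) ^ 2)⁻¹

lemma log_pos_cast {k : ℕ} (hk : 1 ≤ k) : 0 < Real.log (k + 1) := by
  apply Real.log_pos
  have : (1:ℝ) ≤ (k:ℝ) := by exact_mod_cast hk
  linarith

lemma p_mem {k : ℕ} (hk : 1 ≤ k) : p k ∈ Flog := Or.inr ⟨k, hk, rfl⟩

lemma p_anti {k m : ℕ} (hk : 1 ≤ k) (hkm : k ≤ m) : p m ≤ p k := by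
  unfold p
  have h1 := log_pos_cast hk
  have h2 : Real.log (k+1) ≤ Real.log (m+1) := by
    apply Real.log_le_log (by positivity)
    have : (k:ℝ) ≤ (m:ℝ) := by exact_mod_cast hkm
    linarith
  apply one_div_le_one_div_of_le h1 h2

lemma Flog_sub : Flog ⊆ Icc 0 (3/2) := by
  rintro x (rfl | ⟨k, hk, rfl⟩)
  · exact ⟨le_refl 0, by norm_num⟩
  · have h2 : (0.6931471803 : ℝ) < Real.log 2 := Real.log_two_gt_d9
    have h3 : Real.log 2 ≤ Real.log (k+1) := by
      apply Real.log_le_log (by norm_num)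
      have : (1:ℝ) ≤ (k:ℝ) := by exact_mod_cast hk
      linarith
    have hl := log_pos_cast hk
    constructor
    · positivity
    · rw [div_le_iff₀ hl]
      nlinarith

lemma logK2_ge_one {K : ℕ} (hK : 1 ≤ K) : 1 ≤ Real.log ((K:ℝ) + 2) := by
  have h3 : (3:ℝ) ≤ (K:ℝ) + 2 := by
    have : (1:ℝ) ≤ (K:ℝ) := by exact_mod_cast hK
    linarith
  have he : Real.exp 1 < 3 := by have := Real.exp_one_lt_d9; linarith
  calc (1:ℝ) = Real.log (Real.exp 1) := (Real.log_exp 1).symm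
  _ ≤ Real.log ((K:ℝ)+2) := Real.log_le_log (Real.exp_pos 1) (by linarith)

lemma g_pos {K : ℕ} (hK : 1 ≤ K) : 0 < g K := by
  have h1 := logK2_ge_one hK
  have hK2 : (0:ℝ) < (K:ℝ) + 2 := by positivity
  unfold g; positivity

lemma gap_lb {k : ℕ} (hk : 1 ≤ k) :
    (((k:ℝ) + 2) * Real.log ((k:ℝ) + 2) ^ 2)⁻¹ ≤ p k - p (k+1) := by
  have hA : 0 < Real.log ((k:ℝ) + 1) := log_pos_cast hk
  have hB1 : Real.log ((k:ℝ)+1) ≤ Real.log ((k:ℝ)+2) := by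
    apply Real.log_le_log (by positivity); linarith
  have hB : 0 < Real.log ((k:ℝ)+2) := lt_of_lt_of_le hA hB1
  have hk2 : (0:ℝ) < (k:ℝ) + 2 := by positivity
  have hdiff : ((k:ℝ)+2)⁻¹ ≤ Real.log ((k:ℝ)+2) - Real.log ((k:ℝ)+1) := by
    have h := Real.log_le_sub_one_of_pos (x := ((k:ℝ)+1)/((k:ℝ)+2)) (by positivity)
    rw [Real.log_div (by positivity) (by positivity)] at h
    have he : ((k:ℝ)+1)/((k:ℝ)+2) - 1 = -(((k:ℝ)+2)⁻¹) := by
      field_simp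
      norm_num
    rw [he] at h
    linarith
  have hp1 : p (k+1) = 1 / Real.log ((k:ℝ)+2) := by
    unfold p; push_cast; ring_nf
  have hpk : p k = 1 / Real.log ((k:ℝ)+1) := rfl
  rw [hp1, hpk, div_sub_div _ _ hA.ne' hB.ne', one_mul, mul_one,
    inv_eq_one_div, div_le_div_iff₀ (by positivity) (by positivity)]
  have h1 : 1 ≤ ((k:ℝ)+2)*(Real.log ((k:ℝ)+2) - Real.log ((k:ℝ)+1)) := by
    have h1 := mul_le_mul_of_nonneg_left hdiff hk2.le
    rwa [mul_inv_cancel₀ hk2.ne'] at h1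
  nlinarith [mul_pos hA hB, sq_nonneg (Real.log ((k:ℝ)+2))]

lemma g_le_gap {k K : ℕ} (hk : 1 ≤ k) (hkK : k ≤ K) : g K ≤ p k - p (k+1) := by
  refine le_trans ?_ (gap_lb hk)
  unfold g
  have hkK' : (k:ℝ) ≤ (K:ℝ) := by exact_mod_cast hkK
  have h1 : 1 ≤ Real.log ((k:ℝ)+2) := logK2_ge_one hk
  have h2 : Real.log ((k:ℝ)+2) ≤ Real.log ((K:ℝ)+2) :=
    Real.log_le_log (by positivity) (by linarith)
  apply inv_anti₀ (by positivity)
  have : Real.log ((k:ℝ)+2)^2 ≤ Real.log ((K:ℝ)+2)^2 := by nlinarith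
  nlinarith

lemma p_sep {K : ℕ} (hK : 1 ≤ K) :
    ∀ m i : ℕ, 1 ≤ i → i + m ≤ K → (m:ℝ) * g K ≤ p i - p (i+m) := by
  intro m
  induction m with
  | zero => intro i _ _; simp
  | succ n ih =>
    intro i hi hiK
    have h1 : i + n ≤ K := by omega
    have h2 := ih i hi h1
    have h3 : g K ≤ p (i+n) - p (i+n+1) := g_le_gap (by omega) (by omega)
    have : p i - p (i + (n+1)) = (p i - p (i+n)) + (p (i+n) - p (i+n+1)) := by
      have : i + (n+1) = i + n + 1 := by omega
      rw [this]; ring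
    rw [this]
    push_cast
    nlinarith [g_pos hK]

open scoped Classical in
lemma card_filter_le {K : ℕ} (hK : 1 ≤ K) (V : Set ℝ) (hV : EMetric.diam V ≠ ⊤) :
    (((Finset.Icc 1 K).filter (fun k => p k ∈ V)).card : ℝ)
      ≤ (EMetric.diam V).toReal / g K + 1 := by
  classical
  set T := (Finset.Icc 1 K).filter (fun k => p k ∈ V) with hT
  rcases T.eq_empty_or_nonempty with h | h
  · rw [h]
    simp
    have hg := g_pos hK
    positivity
  · set i := T.min' h with hi
    set j := T.max' h with hj
    have hiT : i ∈ T := T.min'_mem h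
    have hjT : j ∈ T := T.max'_mem h
    have hiI : i ∈ Finset.Icc 1 K := (Finset.mem_filter.mp hiT).1
    have hjI : j ∈ Finset.Icc 1 K := (Finset.mem_filter.mp hjT).1
    have hij : i ≤ j := T.min'_le j hjT
    have hiV : p i ∈ V := (Finset.mem_filter.mp hiT).2
    have hjV : p j ∈ V := (Finset.mem_filter.mp hjT).2
    have hi1 : 1 ≤ i := (Finset.mem_Icc.mp hiI).1
    have hjK : j ≤ K := (Finset.mem_Icc.mp hjI).2
    have hsep : ((j - i : ℕ) : ℝ) * g K ≤ p i - p j := by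
      have := p_sep hK (j - i) i hi1 (by omega)
      rwa [Nat.add_sub_cancel' hij] at this
    have hdist : p i - p j ≤ (EMetric.diam V).toReal := by
      have h1 := EMetric.edist_le_diam_of_mem hiV hjV
      have h2 := ENNReal.toReal_mono hV h1
      rw [edist_dist, ENNReal.toReal_ofReal dist_nonneg] at h2
      have : p i - p j ≤ dist (p i) (p j) := by
        rw [Real.dist_eq]
        exact le_abs_self _
      linarith
    have hcard : T.card ≤ j - i + 1 := by
      have hsub : T ⊆ Finset.Icc i j := by
        intro k hk
        exact Finset.mem_Icc.mpr ⟨T.min'_le k hk, T.le_max' k hk⟩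
      calc T.card ≤ (Finset.Icc i j).card := Finset.card_le_card hsub
      _ = j - i + 1 := by rw [Nat.card_Icc]; omega
    have hg := g_pos hK
    have hfin : ((j - i:ℕ):ℝ) ≤ (EMetric.diam V).toReal / g K := by
      rw [le_div_iff₀ hg]
      linarith
    calc (T.card : ℝ) ≤ ((j - i + 1 : ℕ) : ℝ) := by exact_mod_cast hcard
    _ = ((j - i : ℕ) : ℝ) + 1 := by push_cast; ring
    _ ≤ (EMetric.diam V).toReal / g K + 1 := by linarith

open scoped Classical in
lemma key (θ s δ : ℝ) (hθ0 : 0 < θ) (hs0 : 0 ≤ s) (hs1 : s < 1)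
    (K : ℕ) (hK : 1 ≤ K)
    (hA : g K ≤ δ ^ (1/θ))
    (hB : δ ^ (1-s) ≤ 3 * ((K:ℝ) * g K))
    (hδ : 0 < δ) (hδ1 : δ ≤ 1) :
    ¬ interCoverSum θ δ s (7⁻¹ : ℝ) Flog := by
  rintro ⟨𝒰, hcount, hcover, hdiam, hsum⟩
  have hg := g_pos hK
  have hδθ : 0 < δ ^ (1/θ) := Real.rpow_pos_of_pos hδ _
  have hex : ∀ k, 1 ≤ k → ∃ U : ↥𝒰, p k ∈ (U : Set ℝ) := by
    intro k hk
    obtain ⟨U, hU, hpU⟩ := hcover (p_mem hk)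
    exact ⟨⟨U, hU⟩, hpU⟩
  have hne : Nonempty ↥𝒰 := ⟨(hex 1 le_rfl).choose⟩
  let u : ℕ → ↥𝒰 := fun k =>
    if h : ∃ U : ↥𝒰, p k ∈ (U : Set ℝ) then h.choose else Classical.arbitrary _
  have hu : ∀ k, 1 ≤ k → p k ∈ ((u k : ↥𝒰) : Set ℝ) := by
    intro k hk
    have h := hex k hk
    simp only [u, dif_pos h]
    exact h.choose_spec
  have hD : ∀ V : ↥𝒰, EMetric.diam (V : Set ℝ) ≠ ⊤ := by
    intro V
    exact ne_top_of_le_ne_top ofReal_ne_top (hdiam _ V.2).1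
  set D : ↥𝒰 → ℝ := fun V => (EMetric.diam (V : Set ℝ)).toReal with hDdef
  have hDle : ∀ V : ↥𝒰, D V ≤ δ :=
    fun V => ENNReal.toReal_le_of_le_ofReal hδ.le (hdiam _ V.2).1
  have hDge : ∀ V : ↥𝒰, δ ^ (1/θ) ≤ D V := by
    intro V
    exact (ENNReal.ofReal_le_iff_le_toReal (hD V)).mp ((hdiam _ V.2).2 hθ0.ne')
  have hDpos : ∀ V : ↥𝒰, 0 < D V := fun V => lt_of_lt_of_le hδθ (hDge V)
  set 𝒱 : Finset ↥𝒰 := (Finset.Icc 1 K).image u with h𝒱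
  have hcount1 : (K:ℝ) ≤ ∑ V ∈ 𝒱, 2 * D V / g K := by
    have hcards : (Finset.Icc 1 K).card = ∑ V ∈ 𝒱, ((Finset.Icc 1 K).filter
        (fun k => u k = V)).card :=
      Finset.card_eq_sum_card_fiberwise (fun k hk => Finset.mem_image_of_mem u hk)
    have hfib : ∀ V ∈ 𝒱, (((Finset.Icc 1 K).filter (fun k => u k = V)).card : ℝ)
        ≤ 2 * D V / g K := by
      intro V hV
      have hsub : (Finset.Icc 1 K).filter (fun k => u k = V) ⊆
          (Finset.Icc 1 K).filter (fun k => p k ∈ (V : Set ℝ)) := by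
        intro k hk
        rw [Finset.mem_filter] at hk ⊢
        refine ⟨hk.1, ?_⟩
        have hk1 : 1 ≤ k := (Finset.mem_Icc.mp hk.1).1
        have := hu k hk1
        rwa [hk.2] at this
      have h1 : (((Finset.Icc 1 K).filter (fun k => u k = V)).card : ℝ)
          ≤ (((Finset.Icc 1 K).filter (fun k => p k ∈ (V:Set ℝ))).card : ℝ) := by
        exact_mod_cast Finset.card_le_card hsub
      have h2 := card_filter_le hK (V : Set ℝ) (hD V)
      have h3 : (1:ℝ) ≤ D V / g K := by
        rw [le_div_iff₀ hg]
        calc (1:ℝ) * g K = g K := one_mul _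
        _ ≤ δ ^ (1/θ) := hA
        _ ≤ D V := hDge V
      calc (((Finset.Icc 1 K).filter (fun k => u k = V)).card : ℝ)
          ≤ D V / g K + 1 := le_trans h1 h2
      _ ≤ D V / g K + D V / g K := by linarith
      _ = 2 * D V / g K := by ring
    calc (K:ℝ) = ((Finset.Icc 1 K).card : ℝ) := by rw [Nat.card_Icc]; push_cast; ring
    _ = ∑ V ∈ 𝒱, (((Finset.Icc 1 K).filter (fun k => u k = V)).card : ℝ) := by
        exact_mod_cast hcards
    _ ≤ ∑ V ∈ 𝒱, 2 * D V / g K := Finset.sum_le_sum hfib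
  have hsumD : (K:ℝ) * g K / 2 ≤ ∑ V ∈ 𝒱, D V := by
    have : ∑ V ∈ 𝒱, 2 * D V / g K = (2 / g K) * ∑ V ∈ 𝒱, D V := by
      rw [Finset.mul_sum]
      apply Finset.sum_congr rfl
      intro V _; ring
    rw [this] at hcount1
    rw [div_le_iff₀ (by norm_num : (0:ℝ) < 2)]
    calc (K:ℝ) * g K ≤ ((2 / g K) * ∑ V ∈ 𝒱, D V) * g K :=
        mul_le_mul_of_nonneg_right hcount1 hg.le
    _ = (∑ V ∈ 𝒱, D V) * 2 * (g K / g K) := by ring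
    _ = (∑ V ∈ 𝒱, D V) * 2 := by rw [div_self hg.ne']; ring
  have hpow : ∀ V ∈ 𝒱, δ ^ (s - 1) * D V ≤ D V ^ s := by
    intro V _
    have h1 : D V ^ s = D V ^ (s-1) * D V := by
      have h2 := Real.rpow_add (hDpos V) (s-1) 1
      rw [Real.rpow_one] at h2
      calc D V ^ s = D V ^ (s - 1 + 1) := by norm_num
      _ = D V ^ (s-1) * D V := h2
    rw [h1]
    exact mul_le_mul_of_nonneg_right
      (Real.rpow_le_rpow_of_nonpos (hDpos V) (hDle V) (by linarith)) (hDpos V).le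
  have hfinal : (6⁻¹ : ℝ) ≤ ∑ V ∈ 𝒱, D V ^ s := by
    have h1 : δ ^ (s-1) * ((K:ℝ) * g K / 2) ≤ ∑ V ∈ 𝒱, D V ^ s := by
      calc δ ^ (s-1) * ((K:ℝ) * g K / 2) ≤ δ ^ (s-1) * ∑ V ∈ 𝒱, D V :=
          mul_le_mul_of_nonneg_left hsumD (Real.rpow_nonneg hδ.le _)
      _ = ∑ V ∈ 𝒱, δ ^ (s-1) * D V := Finset.mul_sum _ _ _
      _ ≤ ∑ V ∈ 𝒱, D V ^ s := Finset.sum_le_sum hpow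
    have h2 : (6⁻¹:ℝ) ≤ δ ^ (s-1) * ((K:ℝ) * g K / 2) := by
      have h3 : δ ^ (1-s) / 3 ≤ (K:ℝ) * g K := by linarith
      have h4 : δ ^ (s-1) * (δ ^ (1-s) / 3 / 2) ≤ δ ^ (s-1) * ((K:ℝ) * g K / 2) := by
        apply mul_le_mul_of_nonneg_left _ (Real.rpow_nonneg hδ.le _)
        linarith
      have h5 : δ ^ (s-1) * (δ ^ (1-s) / 3 / 2) = 6⁻¹ := by
        rw [show δ ^ (s-1) * (δ ^ (1-s) / 3 / 2) = δ ^ (s-1) * δ ^ (1-s) / 6 by ring]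
        rw [← Real.rpow_add hδ]
        norm_num
      linarith
    linarith
  have hbig : ENNReal.ofReal (6⁻¹:ℝ) ≤ ∑' U : ↥𝒰, EMetric.diam (U : Set ℝ) ^ s := by
    calc ENNReal.ofReal (6⁻¹:ℝ) ≤ ENNReal.ofReal (∑ V ∈ 𝒱, D V ^ s) :=
        ENNReal.ofReal_le_ofReal hfinal
    _ = ∑ V ∈ 𝒱, ENNReal.ofReal (D V ^ s) :=
        ENNReal.ofReal_sum_of_nonneg (fun V _ => Real.rpow_nonneg (hDpos V).le _)
    _ = ∑ V ∈ 𝒱, EMetric.diam (V : Set ℝ) ^ s := by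
        apply Finset.sum_congr rfl
        intro V _
        rw [← ENNReal.ofReal_rpow_of_pos (hDpos V)]
        rw [ENNReal.ofReal_toReal (hD V)]
    _ ≤ ∑' U : ↥𝒰, EMetric.diam (U : Set ℝ) ^ s := ENNReal.sum_le_tsum 𝒱
  have : ENNReal.ofReal (6⁻¹:ℝ) ≤ ENNReal.ofReal (7⁻¹:ℝ) := le_trans hbig hsum
  rw [ENNReal.ofReal_le_ofReal_iff (by norm_num)] at this
  norm_num at this

lemma exp_two_ge_four : (4:ℝ) ≤ Real.exp 2 := by
  have h1 : (2:ℝ) ≤ Real.exp 1 := by have := Real.add_one_le_exp (1:ℝ); linarith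
  have h2 : Real.exp 2 = Real.exp 1 * Real.exp 1 := by
    rw [← Real.exp_add]; norm_num
  nlinarith [Real.exp_pos (1:ℝ)]

lemma exp_ge_quarter_sq {x : ℝ} (hx : 0 ≤ x) : x^2 / 4 ≤ Real.exp x := by
  have h1 : 1 + x/2 ≤ Real.exp (x/2) := by have := Real.add_one_le_exp (x/2); linarith
  have h2 : Real.exp x = Real.exp (x/2) * Real.exp (x/2) := by
    rw [← Real.exp_add]; norm_num
  nlinarith [Real.exp_pos (x/2)]

set_option maxHeartbeats 1000000 in
lemma choose_K (θ s : ℝ) (hθ0 : 0 < θ) (hs1 : s < 1) :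
    ∃ δ₁ > 0, ∀ δ, 0 < δ → δ ≤ δ₁ →
      ∃ K : ℕ, 1 ≤ K ∧ g K ≤ δ ^ (1/θ) ∧ δ ^ (1-s) ≤ 3 * ((K:ℝ) * g K) ∧ δ ≤ 1 := by
  set a : ℝ := (1-s)/2 with ha
  have ha0 : 0 < a := by simp [ha]; linarith
  clear_value a
  set c : ℝ := 2/a + 8/(θ*a^2) with hc
  have hc0 : 0 < c := by positivity
  clear_value c
  refine ⟨Real.exp (-c), Real.exp_pos _, ?_⟩
  intro δ hδ hδ₁
  have hL0 : Real.log δ ≤ -c := by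
    calc Real.log δ ≤ Real.log (Real.exp (-c)) := Real.log_le_log hδ hδ₁
    _ = -c := Real.log_exp _
  set L : ℝ := -Real.log δ with hLdef
  clear_value L
  have hLc : c ≤ L := by simp [hLdef]; linarith
  have hL : 0 < L := lt_of_lt_of_le hc0 hLc
  have hδ1 : δ ≤ 1 := by
    calc δ ≤ Real.exp (-c) := hδ₁
    _ ≤ 1 := Real.exp_le_one_iff.mpr (by linarith)
  have hc1 : 2/a ≤ c := by
    rw [hc]
    have : 0 < 8/(θ*a^2) := by positivity
    linarith
  have hc2 : 8/(θ*a^2) ≤ c := by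
    rw [hc]
    have : 0 < 2/a := by positivity
    linarith
  have hL1 : 2/a ≤ L := le_trans hc1 hLc
  have hL2 : 8/(θ*a^2) ≤ L := le_trans hc2 hLc
  have haL : 2 ≤ a * L := by
    rw [div_le_iff₀ ha0] at hL1; linarith [mul_comm L a]
  set E : ℝ := δ ^ (-a) with hEdef
  have hE : E = Real.exp (a * L) := by
    rw [hEdef, Real.rpow_def_of_pos hδ]
    congr 1
    simp [hLdef]; ring
  clear_value E
  have hE4 : 4 ≤ E := by
    rw [hE]
    calc (4:ℝ) ≤ Real.exp 2 := exp_two_ge_four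
    _ ≤ Real.exp (a*L) := Real.exp_le_exp.mpr haL
  have hEpos : 0 < E := by linarith
  set K : ℕ := ⌊Real.exp (E/2)⌋₊ with hKdef
  have hexpE2 : (3:ℝ) ≤ Real.exp (E/2) := by
    have := Real.add_one_le_exp (E/2); linarith
  have hK1 : 1 ≤ K := by
    apply Nat.le_floor
    norm_num; linarith
  have hKup : (K:ℝ) ≤ Real.exp (E/2) := Nat.floor_le (Real.exp_pos _).le
  have hKlow : Real.exp (E/2) < (K:ℝ) + 1 := Nat.lt_floor_add_one _
  clear_value K
  have hlogK : Real.log ((K:ℝ)+2) ≤ E := by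
    have h1 : (K:ℝ) + 2 ≤ Real.exp (E/2 + 2) := by
      rw [Real.exp_add]
      nlinarith [Real.exp_pos (E/2), exp_two_ge_four]
    calc Real.log ((K:ℝ)+2) ≤ Real.log (Real.exp (E/2+2)) :=
        Real.log_le_log (by positivity) h1
    _ = E/2 + 2 := Real.log_exp _
    _ ≤ E := by linarith
  have hlog1 : 1 ≤ Real.log ((K:ℝ)+2) := logK2_ge_one hK1
  have hgK : g K = (((K:ℝ) + 2) * Real.log ((K:ℝ) + 2) ^ 2)⁻¹ := rfl
  refine ⟨K, hK1, ?_, ?_, hδ1⟩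
  · have hrw : δ ^ (1/θ) = (Real.exp (L/θ))⁻¹ := by
      rw [Real.rpow_def_of_pos hδ, ← Real.exp_neg]
      congr 1
      simp [hLdef]; ring
    rw [hrw, hgK]
    apply inv_anti₀ (Real.exp_pos _)
    have h1 : Real.exp (L/θ) ≤ Real.exp (E/2) := by
      apply Real.exp_le_exp.mpr
      have h2 : (a*L)^2/4 ≤ E := by rw [hE]; exact exp_ge_quarter_sq (by linarith)
      have h3 : 8/(θ*a^2) * (θ * a^2) ≤ L * (θ * a^2) :=
        mul_le_mul_of_nonneg_right hL2 (by positivity)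
      rw [div_mul_cancel₀ _ (by positivity)] at h3
      rw [div_le_div_iff₀ hθ0 (by norm_num : (0:ℝ) < 2)]
      have h4 := mul_le_mul_of_nonneg_left h3 hL.le
      have h5 := mul_le_mul_of_nonneg_right h2 hθ0.le
      nlinarith [h4, h5]
    have h2 : Real.exp (E/2) ≤ (K:ℝ) + 2 := by linarith
    have hKpos : (0:ℝ) < (K:ℝ) + 2 := by positivity
    have h6 : ((K:ℝ)+2) * 1 ≤ ((K:ℝ)+2) * Real.log ((K:ℝ)+2)^2 := by
      apply mul_le_mul_of_nonneg_left _ hKpos.le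
      nlinarith [hlog1]
    linarith only [h1, h2, h6]
  · have hEE : δ ^ (1-s) * (E * E) = 1 := by
      rw [hEdef, ← Real.rpow_add hδ, ← Real.rpow_add hδ]
      have hz : 1 - s + (-a + -a) = 0 := by rw [ha]; ring
      rw [hz]
      exact Real.rpow_zero δ
    have hdpos : 0 < δ ^ (1-s) := Real.rpow_pos_of_pos hδ _
    have hlogsq : Real.log ((K:ℝ)+2)^2 ≤ E * E := by nlinarith [hlogK, hlog1]
    have hK2 : (K:ℝ) + 2 ≤ 3 * K := by
      have : (1:ℝ) ≤ (K:ℝ) := by exact_mod_cast hK1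
      linarith
    have hden : ((K:ℝ)+2) * Real.log ((K:ℝ)+2)^2 ≤ 3 * K * (E * E) := by
      have hKpos : (0:ℝ) < (K:ℝ) + 2 := by positivity
      nlinarith
    have hdenpos : 0 < ((K:ℝ)+2) * Real.log ((K:ℝ)+2)^2 := by
      have : (0:ℝ) < (K:ℝ) + 2 := by positivity
      nlinarith
    rw [hgK]
    rw [← mul_le_mul_iff_of_pos_right hdenpos]
    calc δ ^ (1-s) * (((K:ℝ)+2) * Real.log ((K:ℝ)+2)^2) ≤ δ ^ (1-s) * (3*K*(E*E)) :=
        mul_le_mul_of_nonneg_left hden hdpos.le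
    _ = 3 * K * (δ ^ (1-s) * (E*E)) := by ring
    _ = 3 * K := by rw [hEE]; ring
    _ = 3 * ((K:ℝ) * (((K:ℝ)+2) * Real.log ((K:ℝ)+2)^2)⁻¹) *
          (((K:ℝ)+2) * Real.log ((K:ℝ)+2)^2) := by
        field_simp

lemma no_cover (θ s : ℝ) (hθ0 : 0 < θ) (hs0 : 0 ≤ s) (hs1 : s < 1) :
    ∃ δ₁ > 0, ∀ δ, 0 < δ → δ ≤ δ₁ → ¬ interCoverSum θ δ s (7⁻¹:ℝ) Flog := by
  obtain ⟨δ₁, hδ₁, h⟩ := choose_K θ s hθ0 hs1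
  refine ⟨δ₁, hδ₁, fun δ hδ hle hcov => ?_⟩
  obtain ⟨K, hK1, hA, hB, hd1⟩ := h δ hδ hle
  exact key θ s δ hθ0 hs0 hs1 K hK1 hA hB hδ hd1 hcov

open scoped Classical in
lemma cover_exists (θ s : ℝ) (hθ0 : 0 < θ) (hθ1 : θ ≤ 1) (hs : 1 < s) :
    ∀ ε > 0, ∃ δ₀ > 0, ∀ δ, 0 < δ → δ ≤ δ₀ → interCoverSum θ δ s ε Flog := by
  intro ε hε
  refine ⟨min 1 ((ε/3) ^ (s-1)⁻¹), lt_min one_pos (Real.rpow_pos_of_pos (by linarith) _), ?_⟩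
  intro δ hδ hδ₀
  have hδ1 : δ ≤ 1 := le_trans hδ₀ (min_le_left _ _)
  have hδε : δ ^ (s-1) ≤ ε / 3 := by
    calc δ ^ (s-1) ≤ ((ε/3) ^ (s-1)⁻¹) ^ (s-1) :=
      Real.rpow_le_rpow hδ.le (le_trans hδ₀ (min_le_right _ _)) (by linarith)
    _ = ε / 3 := Real.rpow_inv_rpow (by positivity) (by linarith)
  set N : ℕ := ⌈(2:ℝ)/δ⌉₊ with hN
  set f : ℕ → Set ℝ := fun i => Icc (i*δ) ((i+1)*δ) with hf
  refine ⟨f '' (Set.Iio N), ((Set.finite_Iio _).image f).countable, ?_, ?_, ?_⟩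
  · intro x hx
    obtain ⟨hx0, hx2⟩ := Flog_sub hx
    set i : ℕ := ⌊x/δ⌋₊ with hi
    have hiN : i < N := by
      have h1 : x/δ < (N:ℝ) := by
        have hmono : x/δ ≤ (3/2)/δ := by gcongr
        have hstep : (3/2)/δ < 2/δ := by
          have h0 : (0:ℝ) < (1/2)/δ := by positivity
          have he : 2/δ - (3/2)/δ = (1/2)/δ := by ring
          linarith
        calc x/δ ≤ (3/2)/δ := hmono
        _ < 2/δ := hstep
        _ ≤ N := Nat.le_ceil _
      exact (Nat.floor_lt (by positivity)).mpr h1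
    refine ⟨f i, ⟨i, hiN, rfl⟩, ?_⟩
    constructor
    · calc (i:ℝ) * δ ≤ x/δ * δ :=
          mul_le_mul_of_nonneg_right (Nat.floor_le (by positivity)) hδ.le
      _ = x := by field_simp
    · have h2 : x/δ < i + 1 := Nat.lt_floor_add_one _
      calc x = x/δ * δ := by field_simp
      _ ≤ (i+1) * δ := mul_le_mul_of_nonneg_right h2.le hδ.le
  · rintro U ⟨i, _, rfl⟩
    have hdi : EMetric.diam (f i) = ENNReal.ofReal δ := by
      rw [hf]
      simp only
      rw [EMetric.diam, Real.ediam_Icc]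
      congr 1
      ring
    rw [hdi]
    refine ⟨le_refl _, fun _ => ?_⟩
    apply ENNReal.ofReal_le_ofReal
    calc δ ^ (1/θ) ≤ δ ^ (1:ℝ) :=
      Real.rpow_le_rpow_of_exponent_ge hδ hδ1 (by rw [le_div_iff₀ hθ0]; linarith)
    _ = δ := Real.rpow_one δ
  · have himg : f '' (Set.Iio N) = ↑((Finset.range N).image f) := by
      ext U
      simp [Set.mem_image, Finset.coe_image]
    rw [himg]
    have hsum : ∑' U : ↥(↑((Finset.range N).image f) : Set (Set ℝ)),
        EMetric.diam (U : Set ℝ) ^ s = ∑ U ∈ (Finset.range N).image f,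
        EMetric.diam U ^ s := by
      rw [← Finset.tsum_subtype]
      rfl
    rw [hsum]
    have hterm : ∀ U ∈ (Finset.range N).image f,
        EMetric.diam U ^ s = ENNReal.ofReal (δ ^ s) := by
      rintro U hU
      obtain ⟨i, _, rfl⟩ := Finset.mem_image.mp hU
      have hdi : EMetric.diam (f i) = ENNReal.ofReal δ := by
        rw [hf]; simp only; rw [EMetric.diam, Real.ediam_Icc]; congr 1; ring
      rw [hdi, ENNReal.ofReal_rpow_of_pos hδ]
    rw [Finset.sum_congr rfl hterm, Finset.sum_const, nsmul_eq_mul]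
    have hcard : ((Finset.range N).image f).card ≤ N := by
      calc ((Finset.range N).image f).card ≤ (Finset.range N).card := Finset.card_image_le
      _ = N := Finset.card_range N
    have hN1 : (N:ℝ) ≤ 2/δ + 1 := by
      have := Nat.ceil_lt_add_one (by positivity : (0:ℝ) ≤ 2/δ)
      linarith
    have hNle : (N:ℝ) ≤ 3/δ := by
      have h0 : (1:ℝ) ≤ 1/δ := by rw [le_div_iff₀ hδ]; linarith
      have he : 3/δ = 2/δ + 1/δ := by ring
      linarith
    have hreal : (N:ℝ) * δ ^ s ≤ ε := by
      have hds : δ ^ s = δ ^ (s-1) * δ := by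
        have h2 := Real.rpow_add hδ (s-1) 1
        rw [Real.rpow_one] at h2
        calc δ ^ s = δ ^ (s - 1 + 1) := by norm_num
        _ = δ ^ (s-1) * δ := h2
      have hd2 : (0:ℝ) ≤ δ ^ s := Real.rpow_nonneg hδ.le s
      calc (N:ℝ) * δ ^ s ≤ (3/δ) * δ ^ s := mul_le_mul_of_nonneg_right hNle hd2
      _ = 3 * δ ^ (s-1) := by rw [hds]; field_simp
      _ ≤ ε := by linarith
    calc (((Finset.range N).image f).card : ℝ≥0∞) * ENNReal.ofReal (δ ^ s)
        ≤ (N : ℝ≥0∞) * ENNReal.ofReal (δ ^ s) := by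
          apply mul_le_mul_left (by exact_mod_cast hcard)
    _ = ENNReal.ofReal ((N:ℝ) * δ ^ s) := by
        rw [ENNReal.ofReal_mul (by positivity), ENNReal.ofReal_natCast]
    _ ≤ ENNReal.ofReal ε := ENNReal.ofReal_le_ofReal hreal

lemma Flog_countable : Flog.Countable := by
  apply Set.Countable.insert
  have he : {x : ℝ | ∃ k : ℕ, 1 ≤ k ∧ x = 1 / Real.log (k + 1)} =
      (fun k : ℕ => 1 / Real.log (k + 1)) '' {k | 1 ≤ k} := by
    ext x; simp [eq_comm]
  rw [he]
  exact (Set.to_countable _).image _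

lemma mem_upper {θ s : ℝ} (hθ : θ ∈ Set.Ioc (0:ℝ) 1) (hs : 1 < s) :
    s ∈ {s : ℝ | 0 ≤ s ∧ ∀ ε > 0, ∃ δ₀ > 0, ∀ δ, 0 < δ → δ ≤ δ₀ →
      interCoverSum θ δ s ε Flog} :=
  ⟨by linarith, cover_exists θ s hθ.1 hθ.2 hs⟩

lemma mem_lower {θ s : ℝ} (hθ : θ ∈ Set.Ioc (0:ℝ) 1) (hs : 1 < s) :
    s ∈ {s : ℝ | 0 ≤ s ∧ ∀ ε > 0, ∀ δ₀ > 0, ∃ δ, 0 < δ ∧ δ ≤ δ₀ ∧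
      interCoverSum θ δ s ε Flog} := by
  refine ⟨by linarith, fun ε hε δ₀ hδ₀ => ?_⟩
  obtain ⟨δ₁, hδ₁, h⟩ := cover_exists θ s hθ.1 hθ.2 hs ε hε
  exact ⟨min δ₀ δ₁, lt_min hδ₀ hδ₁, min_le_left _ _,
    h _ (lt_min hδ₀ hδ₁) (min_le_right _ _)⟩

lemma lower_ge_one {θ b : ℝ} (hθ : θ ∈ Set.Ioc (0:ℝ) 1)
    (hb : b ∈ {s : ℝ | 0 ≤ s ∧ ∀ ε > 0, ∀ δ₀ > 0, ∃ δ, 0 < δ ∧ δ ≤ δ₀ ∧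
      interCoverSum θ δ s ε Flog}) : 1 ≤ b := by
  by_contra hlt
  push_neg at hlt
  obtain ⟨δ₁, hδ₁, hno⟩ := no_cover θ b hθ.1 hb.1 hlt
  obtain ⟨δ, hδ, hδle, hcov⟩ := hb.2 (7⁻¹:ℝ) (by norm_num) δ₁ hδ₁
  exact hno δ hδ hδle hcov

lemma upper_ge_one {θ b : ℝ} (hθ : θ ∈ Set.Ioc (0:ℝ) 1)
    (hb : b ∈ {s : ℝ | 0 ≤ s ∧ ∀ ε > 0, ∃ δ₀ > 0, ∀ δ, 0 < δ → δ ≤ δ₀ →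
      interCoverSum θ δ s ε Flog}) : 1 ≤ b := by
  by_contra hlt
  push_neg at hlt
  obtain ⟨δ₁, hδ₁, hno⟩ := no_cover θ b hθ.1 hb.1 hlt
  obtain ⟨δ₀, hδ₀, hcov⟩ := hb.2 (7⁻¹:ℝ) (by norm_num)
  have h1 : 0 < min δ₀ δ₁ := lt_min hδ₀ hδ₁
  exact hno _ h1 (min_le_right _ _) (hcov _ h1 (min_le_left _ _))

lemma lowerInterDim_Flog {θ : ℝ} (hθ : θ ∈ Set.Ioc (0:ℝ) 1) :
    lowerInterDim θ Flog = 1 := by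
  unfold lowerInterDim
  set S := {s : ℝ | 0 ≤ s ∧ ∀ ε > 0, ∀ δ₀ > 0, ∃ δ, 0 < δ ∧ δ ≤ δ₀ ∧
      interCoverSum θ δ s ε Flog} with hS
  have hbdd : BddBelow S := ⟨0, fun x hx => hx.1⟩
  have hne : S.Nonempty := ⟨2, mem_lower hθ one_lt_two⟩
  apply le_antisymm
  · apply _root_.le_of_forall_pos_le_add
    intro η hη
    exact csInf_le hbdd (mem_lower hθ (by linarith))
  · exact le_csInf hne (fun b hb => lower_ge_one hθ hb)

lemma upperInterDim_Flog {θ : ℝ} (hθ : θ ∈ Set.Ioc (0:ℝ) 1) :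
    upperInterDim θ Flog = 1 := by
  unfold upperInterDim
  set S := {s : ℝ | 0 ≤ s ∧ ∀ ε > 0, ∃ δ₀ > 0, ∀ δ, 0 < δ → δ ≤ δ₀ →
      interCoverSum θ δ s ε Flog} with hS
  have hbdd : BddBelow S := ⟨0, fun x hx => hx.1⟩
  have hne : S.Nonempty := ⟨2, mem_upper hθ one_lt_two⟩
  apply le_antisymm
  · apply _root_.le_of_forall_pos_le_add
    intro η hη
    exact csInf_le hbdd (mem_upper hθ (by linarith))
  · exact le_csInf hne (fun b hb => upper_ge_one hθ hb)

lemma mem_zero {s : ℝ} (hs : 0 < s) :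
    s ∈ {s : ℝ | 0 ≤ s ∧ ∀ ε > 0, ∀ δ₀ > 0, ∃ δ, 0 < δ ∧ δ ≤ δ₀ ∧
      interCoverSum 0 δ s ε Flog} := by
  refine ⟨hs.le, fun ε hε δ₀ hδ₀ => ⟨δ₀, hδ₀, le_refl _, ?_⟩⟩
  refine ⟨(fun x => ({x} : Set ℝ)) '' Flog, Flog_countable.image _, ?_, ?_, ?_⟩
  · intro x hx
    exact ⟨{x}, ⟨x, hx, rfl⟩, rfl⟩
  · rintro U ⟨x, _, rfl⟩
    rw [EMetric.diam, EMetric.diam_singleton]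
    exact ⟨zero_le, fun h => absurd rfl h⟩
  · have hz : ∀ U : ↥((fun x => ({x} : Set ℝ)) '' Flog),
        EMetric.diam (U : Set ℝ) ^ s = 0 := by
      rintro ⟨U, x, _, rfl⟩
      show EMetric.diam ({x} : Set ℝ) ^ s = 0
      rw [EMetric.diam, EMetric.diam_singleton]
      exact ENNReal.zero_rpow_of_pos hs
    rw [tsum_congr hz]
    simp

lemma lowerInterDim_zero : lowerInterDim 0 Flog = 0 := by
  unfold lowerInterDim
  set S := {s : ℝ | 0 ≤ s ∧ ∀ ε > 0, ∀ δ₀ > 0, ∃ δ, 0 < δ ∧ δ ≤ δ₀ ∧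
      interCoverSum 0 δ s ε Flog} with hS
  have hbdd : BddBelow S := ⟨0, fun x hx => hx.1⟩
  have hne : S.Nonempty := ⟨1, mem_zero one_pos⟩
  apply le_antisymm
  · apply _root_.le_of_forall_pos_le_add
    intro η hη
    have := csInf_le hbdd (mem_zero hη)
    linarith
  · exact le_csInf hne (fun b hb => hb.1)

end
end Stmt16

theorem stmt16 :
    (∀ θ ∈ Set.Ioc (0:ℝ) 1,
      lowerInterDim θ (insert (0:ℝ) {x | ∃ k : ℕ, 1 ≤ k ∧ x = 1 / Real.log (k + 1)}) = 1 ∧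
      upperInterDim θ (insert (0:ℝ) {x | ∃ k : ℕ, 1 ≤ k ∧ x = 1 / Real.log (k + 1)}) = 1) ∧
    dimH (insert (0:ℝ) {x | ∃ k : ℕ, 1 ≤ k ∧ x = 1 / Real.log (k + 1)}) = 0 ∧
    lowerInterDim 0 (insert (0:ℝ) {x | ∃ k : ℕ, 1 ≤ k ∧ x = 1 / Real.log (k + 1)}) = 0 ∧
    ¬ ContinuousWithinAt
        (fun θ => lowerInterDim θ
          (insert (0:ℝ) {x | ∃ k : ℕ, 1 ≤ k ∧ x = 1 / Real.log (k + 1)}))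
        (Set.Ici 0) 0 := by
  have hF : insert (0:ℝ) {x | ∃ k : ℕ, 1 ≤ k ∧ x = 1 / Real.log (k + 1)} = Stmt16.Flog := rfl
  rw [hF]
  refine ⟨fun θ hθ => ⟨Stmt16.lowerInterDim_Flog hθ, Stmt16.upperInterDim_Flog hθ⟩,
    dimH_countable Stmt16.Flog_countable, Stmt16.lowerInterDim_zero, ?_⟩
  intro hcont
  unfold ContinuousWithinAt at hcont
  simp only [Stmt16.lowerInterDim_zero] at hcont
  have hseq : Filter.Tendsto (fun n : ℕ => (1:ℝ)/(n+2)) Filter.atTop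
      (nhdsWithin 0 (Set.Ici 0)) := by
    rw [tendsto_nhdsWithin_iff]
    constructor
    · have h0 := (tendsto_one_div_add_atTop_nhds_zero_nat (𝕜 := ℝ)).comp
        (Filter.tendsto_add_atTop_nat 1)
      have he : ((fun n : ℕ => (1:ℝ)/(n+1)) ∘ (fun n : ℕ => n + 1)) =
          fun n : ℕ => (1:ℝ)/(n+2) := by
        funext n
        simp only [Function.comp_apply]
        push_cast
        ring_nf
      rwa [he] at h0
    · filter_upwards with n
      simp only [Set.mem_Ici]
      positivity
  have hcomp := hcont.comp hseq
  have heq : (fun n : ℕ => lowerInterDim ((1:ℝ)/(n+2)) Stmt16.Flog) = fun _ => (1:ℝ) := by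
    funext n
    apply Stmt16.lowerInterDim_Flog
    constructor
    · positivity
    · rw [div_le_one (by positivity)]
      have : (0:ℝ) ≤ (n:ℝ) := n.cast_nonneg
      linarith
  rw [Function.comp_def] at hcomp
  rw [heq] at hcomp
  have := tendsto_nhds_unique hcomp tendsto_const_nhds
  norm_num at this
end
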